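/- arXiv:1208.1915 — 9 statements merged into one kernel-verified Lean document; each statement's English description precedes it below -/
import Mathlib

section
/- Let n ≥ 1 and let x = x_1 x_2 … x_{n+1} be a 210-avoiding primitive ascent sequence of length n+1, and set a_i = i + x_{i+1} − asc(x_1 x_2 … x_{i+1}) for 1 ≤ i ≤ n. If 1 ≤ i < j ≤ n and a_i ≥ a_j, then x_{i+1} > x_{j+1}. -/
/-- `asc x m` is the number of ascents in the sequence `x 1, x 2, …, x m`,
i.e. the number of indices `1 ≤ i ≤ m - 1` with `x i < x (i+1)`. -/
def asc (x : ℕ → ℕ) (m : ℕ) : ℕ :=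
  ((Finset.Ico 1 m).filter (fun i => x i < x (i + 1))).card

/-- `x 1, …, x m` is an ascent sequence. -/
def AscentSeq (x : ℕ → ℕ) (m : ℕ) : Prop :=
  x 1 = 0 ∧ ∀ i, 2 ≤ i → i ≤ m → x i ≤ asc x (i - 1) + 1

/-- `x 1, …, x m` avoids the pattern 210. -/
def Avoids210 (x : ℕ → ℕ) (m : ℕ) : Prop :=
  ¬ ∃ i j k, 1 ≤ i ∧ i < j ∧ j < k ∧ k ≤ m ∧ x j < x i ∧ x k < x j

/-- `x 1, …, x m` is primitive: no two consecutive equal entries. -/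
def Primitive (x : ℕ → ℕ) (m : ℕ) : Prop :=
  ∀ i, 1 ≤ i → i < m → x i ≠ x (i + 1)

lemma asc_succ (x : ℕ → ℕ) (m : ℕ) (hm : 1 ≤ m) :
    asc x (m + 1) = asc x m + (if x m < x (m + 1) then 1 else 0) := by
  unfold asc
  rw [Nat.Ico_succ_right_eq_insert_Ico hm, Finset.filter_insert]
  split
  · rw [Finset.card_insert_of_notMem (by simp), add_comm]
  · simp

lemma asc_le (x : ℕ → ℕ) (m : ℕ) : asc x (m + 1) ≤ m := by
  have := Finset.card_filter_le (Finset.Ico 1 (m + 1)) (fun i => x i < x (i + 1))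
  simpa [asc] using this

/-- Lemma 3.1: if `x` is a 210-avoiding primitive ascent sequence of length `n+1` and
`a i = i + x (i+1) - asc(x 1 … x (i+1))`, then `a i ≥ a j` with `i < j` forces
`x (i+1) > x (j+1)`. -/
theorem stmt0 (n : ℕ) (hn : 1 ≤ n) (x : ℕ → ℕ)
    (hasc : AscentSeq x (n + 1)) (hav : Avoids210 x (n + 1)) (hprim : Primitive x (n + 1))
    (a : ℕ → ℕ) (ha : ∀ i, 1 ≤ i → i ≤ n → a i = i + x (i + 1) - asc x (i + 1)) :
    ∀ i j, 1 ≤ i → i < j → j ≤ n → a j ≤ a i → x (j + 1) < x (i + 1) := by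
  set g : ℕ → ℤ := fun k => (k : ℤ) + x (k + 1) - asc x (k + 1) with hg
  have hstep : ∀ k : ℕ, g (k + 1) = g k + 1 + x (k + 2) - x (k + 1) -
      (if x (k + 1) < x (k + 2) then 1 else 0) := by
    intro k
    have h := asc_succ x (k + 1) (by omega)
    simp only [hg]
    rw [show k + 1 + 1 = k + 2 from rfl] at h
    rw [h]
    split <;> push_cast <;> ring
  have chain : ∀ i j, i + 1 ≤ j → (∀ k, i ≤ k → k < j → x (k + 1) < x (k + 2)) →
      x (i + 1) < x (j + 1) := by
    intro i j hij
    induction j, hij using Nat.le_induction with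
    | base => intro h; exact h i le_rfl (by omega)
    | succ j hj ih =>
      intro h
      have h1 := ih (fun k hk1 hk2 => h k hk1 (by omega))
      have h2 := h j (by omega) (by omega)
      exact h1.trans h2
  have key : ∀ i j, i + 1 ≤ j → j ≤ n →
      (g i + 1 + (x (j + 1) : ℤ) - x (i + 1) ≤ g j) ∨
      ((∀ k, i ≤ k → k < j → x (k + 1) < x (k + 2)) ∧
        g j = g i + (x (j + 1) : ℤ) - x (i + 1)) := by
    intro i j hij
    induction j, hij using Nat.le_induction with
    | base =>
      intro hin
      have hne : x (i + 1) ≠ x (i + 2) := hprim (i + 1) (by omega) (by omega)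
      have hs := hstep i
      by_cases hlt : x (i + 1) < x (i + 2)
      · right
        refine ⟨fun k hk1 hk2 => ?_, ?_⟩
        · have hk : k = i := by omega
          subst hk; exact hlt
        · rw [hs]; simp only [if_pos hlt]; ring
      · left
        have hgt : x (i + 2) < x (i + 1) := by omega
        rw [hs]; simp only [if_neg hlt]
        have : (x (i + 2) : ℤ) < x (i + 1) := by exact_mod_cast hgt
        linarith
    | succ j hj ih =>
      intro hjn
      have ihj := ih (by omega)
      have hne : x (j + 1) ≠ x (j + 2) := hprim (j + 1) (by omega) (by omega)
      have hs := hstep j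
      by_cases hlt : x (j + 1) < x (j + 2)
      · have hltz : (x (j + 1) : ℤ) < x (j + 2) := by exact_mod_cast hlt
        rcases ihj with h | ⟨hall, heq⟩
        · left; rw [hs]; simp only [if_pos hlt]; linarith
        · right
          refine ⟨fun k hk1 hk2 => ?_, ?_⟩
          · rcases Nat.lt_or_ge k j with h' | h'
            · exact hall k hk1 h'
            · have hk : k = j := by omega
              subst hk; exact hlt
          · rw [hs, heq]; simp only [if_pos hlt]; ring
      · left
        have hgt : x (j + 2) < x (j + 1) := by omega
        have hgtz : (x (j + 2) : ℤ) < x (j + 1) := by exact_mod_cast hgt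
        rw [hs]; simp only [if_neg hlt]
        rcases ihj with h | ⟨hall, heq⟩
        · linarith
        · rw [heq]; linarith
  have hcast : ∀ i, 1 ≤ i → i ≤ n → (a i : ℤ) = g i := by
    intro i h1 h2
    rw [ha i h1 h2]
    have h3 := asc_le x i
    simp only [hg]
    omega
  intro i j h1 h2 h3 h4
  by_contra hcon
  push_neg at hcon
  have hk := key i j h2 h3
  have hgij : g i < g j := by
    rcases hk with h | ⟨hall, heq⟩
    · have : (x (i + 1) : ℤ) ≤ x (j + 1) := by exact_mod_cast hcon
      linarith
    · have hc := chain i j h2 hall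
      have : (x (i + 1) : ℤ) < x (j + 1) := by exact_mod_cast hc
      linarith
  have hai := hcast i h1 (by omega)
  have haj := hcast j (by omega) h3
  have haz : (a j : ℤ) ≤ a i := by exact_mod_cast h4
  omega
end

section
/- Let n ≥ 1 and let x = x_1 x_2 … x_{n+1} be a 210-avoiding primitive ascent sequence of length n+1, and set a_i = i + x_{i+1} − asc(x_1 x_2 … x_{i+1}) for 1 ≤ i ≤ n. Then 1 ≤ a_i ≤ i for all 1 ≤ i ≤ n, and there are no indices 1 ≤ i < j < k ≤ n with a_i ≥ a_j ≥ a_k; that is, (a_1, …, a_n) ∈ N(Δ_n). -/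
/-- `(a 1, …, a n) ∈ N(Δ_n)`: a 01-filling of the staircase `Δ_n` where row `i`
has its unique 1 in column `a i` (so `1 ≤ a i ≤ i`), with no NE-chain of length 3
(no `i < j < k` with `a i ≥ a j ≥ a k`). -/
def NDelta (a : ℕ → ℕ) (n : ℕ) : Prop :=
  (∀ i, 1 ≤ i → i ≤ n → 1 ≤ a i ∧ a i ≤ i) ∧
  ¬ ∃ i j k, 1 ≤ i ∧ i < j ∧ j < k ∧ k ≤ n ∧ a j ≤ a i ∧ a k ≤ a j

lemma asc_mono (x : ℕ → ℕ) {a b : ℕ} (h : a ≤ b) : asc x a ≤ asc x b := by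
  unfold asc
  exact Finset.card_le_card (Finset.filter_subset_filter _ (Finset.Ico_subset_Ico_right h))

lemma asc_split (x : ℕ → ℕ) {i j : ℕ} (hij : i ≤ j) :
    asc x (j + 1) = asc x (i + 1) +
      ((Finset.Ico (i + 1) (j + 1)).filter (fun t => x t < x (t + 1))).card := by
  unfold asc
  rw [← Finset.card_union_of_disjoint
      (Finset.disjoint_filter_filter (Finset.Ico_disjoint_Ico_consecutive 1 (i + 1) (j + 1))),
    ← Finset.filter_union, Finset.Ico_union_Ico_eq_Ico (by omega) (by omega)]

lemma asc_one (x : ℕ → ℕ) : asc x 1 = 0 := by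
  unfold asc; simp

lemma chain (x : ℕ → ℕ) : ∀ i j, i < j →
    (∀ t, i + 1 ≤ t → t ≤ j → x t < x (t + 1)) → x (i + 1) < x (j + 1) := by
  intro i j hij h
  induction j with
  | zero => omega
  | succ j ih =>
    rcases Nat.lt_or_ge i j with h' | h'
    · exact lt_trans (ih h' (fun t ht1 ht2 => h t ht1 (by omega)))
        (h (j + 1) (by omega) le_rfl)
    · have : i = j := by omega
      subst this
      exact h (i + 1) le_rfl le_rfl

lemma x_le_asc (n : ℕ) (x : ℕ → ℕ) (hasc : AscentSeq x (n + 1)) (hprim : Primitive x (n + 1))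
    {i : ℕ} (h1 : 1 ≤ i) (h2 : i ≤ n) : x (i + 1) ≤ asc x (i + 1) := by
  have hcond := hasc.2 (i + 1) (by omega) (by omega)
  rw [Nat.add_sub_cancel] at hcond
  rw [asc_succ x i h1]
  by_cases hc : x i < x (i + 1)
  · simp only [hc, if_true]
    exact hcond
  · have hne := hprim i h1 (by omega)
    have hlt : x (i + 1) < x i := by omega
    rcases Nat.eq_or_lt_of_le h1 with h | h
    · exfalso; rw [← h, hasc.1] at hlt; omega
    · have hcond2 := hasc.2 i (by omega) (by omega)
      have hmono : asc x (i - 1) ≤ asc x i := asc_mono x (by omega)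
      simp only [hc, if_false]
      omega

lemma key (n : ℕ) (x : ℕ → ℕ) (a : ℕ → ℕ)
    (ha : ∀ i, 1 ≤ i → i ≤ n → a i = i + x (i + 1) - asc x (i + 1))
    {i j : ℕ} (h1 : 1 ≤ i) (hij : i < j) (hj : j ≤ n) (hle : a j ≤ a i) :
    x (j + 1) < x (i + 1) := by
  set A := ((Finset.Ico (i + 1) (j + 1)).filter (fun t => x t < x (t + 1))).card with hA
  have hsplit := asc_split x (le_of_lt hij)
  have hAle : A ≤ j - i := by
    calc A ≤ (Finset.Ico (i + 1) (j + 1)).card := Finset.card_filter_le _ _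
      _ = j - i := by rw [Nat.card_Ico]; omega
  have h1' := asc_le x i
  have h2' := asc_le x j
  rw [ha i h1 (by omega), ha j (by omega) hj] at hle
  rcases Nat.lt_or_ge A (j - i) with hlt | hge
  · omega
  · have heq : (Finset.Ico (i + 1) (j + 1)).filter (fun t => x t < x (t + 1)) =
        Finset.Ico (i + 1) (j + 1) :=
      Finset.eq_of_subset_of_card_le (Finset.filter_subset _ _)
        (by rw [Nat.card_Ico]; omega)
    have hall : ∀ t, i + 1 ≤ t → t ≤ j → x t < x (t + 1) := by
      intro t ht1 ht2
      have hmem : t ∈ Finset.Ico (i + 1) (j + 1) := by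
        rw [Finset.mem_Ico]; omega
      rw [← heq] at hmem
      exact (Finset.mem_filter.mp hmem).2
    have := chain x i j hij hall
    omega

/-- Theorem 3.2: the map `φ` is well defined, i.e. `(a 1, …, a n) ∈ N(Δ_n)`. -/
theorem stmt1 (n : ℕ) (hn : 1 ≤ n) (x : ℕ → ℕ)
    (hasc : AscentSeq x (n + 1)) (hav : Avoids210 x (n + 1)) (hprim : Primitive x (n + 1))
    (a : ℕ → ℕ) (ha : ∀ i, 1 ≤ i → i ≤ n → a i = i + x (i + 1) - asc x (i + 1)) :
    NDelta a n := by
  constructor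
  · intro i h1 h2
    have hub := x_le_asc n x hasc hprim h1 h2
    have h1' := asc_le x i
    constructor
    · rw [ha i h1 h2]
      -- show asc x (i+1) < i + x (i+1)
      have hsplit := asc_split x (Nat.zero_le i)
      rw [asc_one] at hsplit
      simp only [Nat.zero_add] at hsplit
      rcases Nat.lt_or_ge ((Finset.Ico 1 (i + 1)).filter (fun t => x t < x (t + 1))).card i
        with hlt | hge
      · omega
      · have heq : (Finset.Ico 1 (i + 1)).filter (fun t => x t < x (t + 1)) =
            Finset.Ico 1 (i + 1) :=
          Finset.eq_of_subset_of_card_le (Finset.filter_subset _ _)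
            (by rw [Nat.card_Ico]; omega)
        have hall : ∀ t, 0 + 1 ≤ t → t ≤ i → x t < x (t + 1) := by
          intro t ht1 ht2
          have hmem : t ∈ Finset.Ico 1 (i + 1) := by rw [Finset.mem_Ico]; omega
          rw [← heq] at hmem
          exact (Finset.mem_filter.mp hmem).2
        have := chain x 0 i h1 hall
        have hx1 := hasc.1
        omega
    · rw [ha i h1 h2]
      omega
  · rintro ⟨i, j, k, h1, hij, hjk, hk, hji, hkj⟩
    have hxji := key n x a ha h1 hij (by omega) hji
    have hxkj := key n x a ha (by omega) hjk hk hkj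
    exact hav ⟨i + 1, j + 1, k + 1, by omega, by omega, by omega, by omega, hxji, hxkj⟩
end

section
/- Let n ≥ 1, let (a_1, …, a_n) ∈ N(Δ_n), and let x_1, …, x_{n+1} be the sequence produced from (a_1, …, a_n) by the recursive rule. Then x_{i+1} = asc(x_1 x_2 … x_{i+1}) + a_i − i for all 1 ≤ i ≤ n. -/
/-- `ascZ x m` is the number of ascents in the integer sequence `x 1, …, x m`. -/
def ascZ (x : ℕ → ℤ) (m : ℕ) : ℕ :=
  ((Finset.Ico 1 m).filter (fun i => x i < x (i + 1))).card

/-- `x 1, …, x (n+1)` is the (integer-valued) sequence produced from `(a 1, …, a n)`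
by the recursive rule: `x 1 = 0`, `x 2 = 1`, and for `2 ≤ i ≤ n`,
`x (i+1) = asc(x 1 … x i) + 1 + a i - i` if `a (i-1) < a i`, and
`x (i+1) = asc(x 1 … x i) + a i - i` if `a (i-1) ≥ a i`. -/
def RecRule (a : ℕ → ℕ) (n : ℕ) (x : ℕ → ℤ) : Prop :=
  x 1 = 0 ∧ x 2 = 1 ∧ ∀ i, 2 ≤ i → i ≤ n →
    x (i + 1) = if a (i - 1) < a i
      then (ascZ x i : ℤ) + 1 + (a i : ℤ) - (i : ℤ)
      else (ascZ x i : ℤ) + (a i : ℤ) - (i : ℤ)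

lemma ascZ_succ (x : ℕ → ℤ) (m : ℕ) (hm : 1 ≤ m) :
    ascZ x (m + 1) = ascZ x m + if x m < x (m + 1) then 1 else 0 := by
  unfold ascZ
  rw [show m + 1 = m + 1 from rfl, Nat.Ico_succ_right_eq_insert_Ico hm,
    Finset.filter_insert]
  split
  · rw [Finset.card_insert_of_notMem (by simp)]
  · simp

/-- Lemma 3.3 (first part): for `(a 1, …, a n) ∈ N(Δ_n)`, the sequence produced by the
recursive rule satisfies `x (i+1) = asc(x 1 … x (i+1)) + a i - i` for all `1 ≤ i ≤ n`. -/
theorem stmt2 (n : ℕ) (hn : 1 ≤ n) (a : ℕ → ℕ) (hA : NDelta a n)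
    (x : ℕ → ℤ) (hx : RecRule a n x) :
    ∀ i, 1 ≤ i → i ≤ n → x (i + 1) = (ascZ x (i + 1) : ℤ) + (a i : ℤ) - (i : ℤ) := by
  obtain ⟨hx1, hx2, hrec⟩ := hx
  intro i hi
  induction i, hi using Nat.le_induction with
  | base =>
    intro _
    have ha1 : a 1 = 1 := by
      have := hA.1 1 le_rfl hn
      omega
    have : ascZ x 2 = 1 := by
      unfold ascZ
      rw [show Finset.Ico 1 2 = {1} from rfl]
      rw [Finset.filter_singleton]
      simp [hx1, hx2]
    rw [hx2, this, ha1]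
    norm_num
  | succ i hi IH =>
    intro hin
    have IH' := IH (by omega)
    have hrec' := hrec (i + 1) (by omega) hin
    simp only [Nat.add_sub_cancel] at hrec'
    have hsucc := ascZ_succ x (i + 1) (by omega)
    by_cases h : a i < a (i + 1)
    · rw [if_pos h] at hrec'
      have hc : (a i : ℤ) < (a (i + 1) : ℤ) := by exact_mod_cast h
      have hasc : x (i + 1) < x (i + 1 + 1) := by
        rw [hrec', IH']; push_cast; linarith
      rw [if_pos hasc] at hsucc
      rw [hrec', hsucc]; push_cast; ring
    · rw [if_neg h] at hrec'
      have hc : (a (i + 1) : ℤ) ≤ (a i : ℤ) := by exact_mod_cast Nat.le_of_not_lt h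
      have hasc : ¬ x (i + 1) < x (i + 1 + 1) := by
        rw [hrec', IH']; push_cast; linarith
      rw [if_neg hasc] at hsucc
      rw [hrec', hsucc]; push_cast; ring
end

section
/- Let n ≥ 1, let (a_1, …, a_n) ∈ N(Δ_n), and let x_1, …, x_{n+1} be the sequence produced from (a_1, …, a_n) by the recursive rule. Then x_1 x_2 … x_{n+1} is a 210-avoiding primitive ascent sequence of length n+1; that is, x_1 = 0, 0 ≤ x_{i+1} ≤ asc(x_1 x_2 … x_i) + 1 for all 1 ≤ i ≤ n, x_i ≠ x_{i+1} for all 1 ≤ i ≤ n, and there are no indices i < j < k with x_i > x_j > x_k. -/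
namespace Stmt4Aux

/-- number of weak descents `a (j-1) ≥ a j` for `j ∈ [2, m]`. -/
def gcnt (a : ℕ → ℕ) (m : ℕ) : ℕ :=
  ((Finset.Ico 2 (m + 1)).filter (fun j => a j ≤ a (j - 1))).card

lemma gcnt_split (a : ℕ → ℕ) {p q : ℕ} (hpq : p ≤ q) (hp : 1 ≤ p) :
    gcnt a q = gcnt a p
      + ((Finset.Ico (p + 1) (q + 1)).filter (fun j => a j ≤ a (j - 1))).card := by
  unfold gcnt
  rw [← Finset.card_union_of_disjoint
      (Finset.disjoint_filter_filter (Finset.Ico_disjoint_Ico_consecutive 2 (p + 1) (q + 1))),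
    ← Finset.filter_union, Finset.Ico_union_Ico_eq_Ico (by omega) (by omega)]

lemma gcnt_step (a : ℕ → ℕ) {m : ℕ} (hm : 1 ≤ m) :
    gcnt a (m + 1) = gcnt a m + (if a (m + 1) ≤ a m then 1 else 0) := by
  rw [gcnt_split a (show m ≤ m + 1 by omega) hm]
  congr 1
  rw [Nat.Ico_succ_singleton, Finset.filter_singleton]
  simp only [Nat.add_sub_cancel]
  split_ifs <;> simp

lemma ascZ_step (x : ℕ → ℤ) {m : ℕ} (hm : 1 ≤ m) :
    ascZ x (m + 1) = ascZ x m + (if x m < x (m + 1) then 1 else 0) := by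
  unfold ascZ
  rw [← Finset.Ico_union_Ico_eq_Ico (show 1 ≤ m by omega) (show m ≤ m + 1 by omega),
    Finset.filter_union,
    Finset.card_union_of_disjoint
      (Finset.disjoint_filter_filter (Finset.Ico_disjoint_Ico_consecutive 1 m (m + 1))),
    Nat.Ico_succ_singleton, Finset.filter_singleton]
  split_ifs <;> simp

variable {a : ℕ → ℕ} {n : ℕ}

/-- a weak-descent bottom is strictly smaller than everything after it. -/
lemma K1 (hA : NDelta a n) {j t : ℕ} (hj : 2 ≤ j) (hd : a j ≤ a (j - 1))
    (hjt : j < t) (htn : t ≤ n) : a j < a t := by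
  by_contra h
  exact hA.2 ⟨j - 1, j, t, by omega, by omega, hjt, htn, hd, by omega⟩

lemma gcnt_le (hA : NDelta a n) {q : ℕ} (hq1 : 1 ≤ q) (hqn : q ≤ n) : gcnt a q ≤ a q := by
  have h : ((Finset.Ico 2 (q + 1)).filter (fun j => a j ≤ a (j - 1))).card
      ≤ (Finset.Icc 1 (a q)).card := by
    apply Finset.card_le_card_of_injOn a
    · intro j hj
      simp only [Finset.mem_coe, Finset.mem_filter, Finset.mem_Ico] at hj
      obtain ⟨⟨hj2, hjq⟩, hjd⟩ := hj
      simp only [Finset.mem_coe, Finset.mem_Icc]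
      refine ⟨(hA.1 j (by omega) (by omega)).1, ?_⟩
      rcases eq_or_lt_of_le (show j ≤ q by omega) with h | h
      · rw [h]
      · exact le_of_lt (K1 hA hj2 hjd h hqn)
    · intro j hj j' hj' hEq
      rw [Finset.mem_coe, Finset.mem_filter, Finset.mem_Ico] at hj hj'
      by_contra hne
      rcases Nat.lt_or_ge j j' with h | h
      · have := K1 hA (show 2 ≤ j by omega) hj.2 h (by omega : j' ≤ n)
        omega
      · have := K1 hA (show 2 ≤ j' by omega) hj'.2 (by omega : j' < j) (by omega : j ≤ n)
        omega
  have hc : (Finset.Icc 1 (a q)).card = a q := by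
    rw [Nat.card_Icc]; omega
  unfold gcnt
  omega

lemma xval (hA : NDelta a n) {x : ℕ → ℤ} (hx : RecRule a n x) :
    ∀ i, 1 ≤ i → i ≤ n →
      x (i + 1) = (a i : ℤ) - gcnt a i ∧ (ascZ x (i + 1) : ℤ) = (i : ℤ) - gcnt a i := by
  intro i hi
  induction i, hi using Nat.le_induction with
  | base =>
    intro _
    have ha1 : a 1 = 1 := by
      have := hA.1 1 le_rfl (by omega)
      omega
    have hg1 : gcnt a 1 = 0 := by
      unfold gcnt
      simp
    have hasc : ascZ x 2 = 1 := by
      unfold ascZ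
      rw [Nat.Ico_succ_singleton, Finset.filter_singleton, if_pos]
      · simp
      · rw [hx.1, hx.2.1]; norm_num
    rw [hx.2.1, ha1, hg1, hasc]
    norm_num
  | succ i hi ih =>
    intro hin
    obtain ⟨ihx, iha⟩ := ih (by omega)
    have hrec := hx.2.2 (i + 1) (by omega) hin
    simp only [Nat.add_sub_cancel] at hrec
    have hg := gcnt_step a hi
    have hx2 : x (i + 1 + 1) = (a (i + 1) : ℤ) - gcnt a (i + 1) := by
      rw [hrec]
      split_ifs with hcase
      · have hg' : gcnt a (i + 1) = gcnt a i := by rw [hg, if_neg (by omega)]; omega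
        omega
      · have hg' : gcnt a (i + 1) = gcnt a i + 1 := by rw [hg, if_pos (by omega)]
        omega
    refine ⟨hx2, ?_⟩
    have hstep := ascZ_step x (show 1 ≤ i + 1 by omega)
    by_cases hcase : a i < a (i + 1)
    · have hg' : gcnt a (i + 1) = gcnt a i := by rw [hg, if_neg (by omega)]; omega
      have hlt : x (i + 1) < x (i + 1 + 1) := by
        rw [ihx, hx2, hg']
        have := hcase
        omega
      rw [hstep, if_pos hlt]
      push_cast
      omega
    · have hg' : gcnt a (i + 1) = gcnt a i + 1 := by rw [hg, if_pos (by omega)]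
      have hlt : ¬ x (i + 1) < x (i + 1 + 1) := by
        rw [ihx, hx2, hg']
        have : a (i + 1) ≤ a i := by omega
        omega
      rw [hstep, if_neg hlt]
      push_cast
      omega

/-- If `f p > f q` for `p < q`, there is `u < q` with `a u ≥ a q`. -/
lemma lemC (hA : NDelta a n) :
    ∀ q p, 2 ≤ p → p < q → q ≤ n →
      (a q : ℤ) - gcnt a q < (a p : ℤ) - gcnt a p →
      ∃ u, 1 ≤ u ∧ u < q ∧ a q ≤ a u := by
  intro q
  induction q using Nat.strong_induction_on with
  | _ q IH =>
    intro p hp2 hpq hqn hf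
    by_cases hap : a q ≤ a p
    · exact ⟨p, by omega, hpq, hap⟩
    push_neg at hap
    set F := (Finset.Ico (p + 1) (q + 1)).filter (fun j => a j ≤ a (j - 1)) with hF
    have hsplit := gcnt_split a (le_of_lt hpq) (show 1 ≤ p by omega)
    by_cases hFe : F = ∅
    · exfalso
      rw [← hF, hFe] at hsplit
      simp at hsplit
      omega
    · have hne := Finset.nonempty_iff_ne_empty.mpr hFe
      have hjmem := F.max'_mem hne
      set j := F.max' hne with hj
      rw [hF, Finset.mem_filter, Finset.mem_Ico] at hjmem
      obtain ⟨⟨hjp, hjq1⟩, hjd⟩ := hjmem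
      by_cases hjq : j = q
      · exact ⟨q - 1, by omega, by omega, by rw [← hjq]; omega⟩
      · have hjq' : j < q := by omega
        have hgq : gcnt a q = gcnt a j := by
          have h2 := gcnt_split a (le_of_lt hjq') (show 1 ≤ j by omega)
          have he : ((Finset.Ico (j + 1) (q + 1)).filter (fun t => a t ≤ a (t - 1))) = ∅ := by
            rw [Finset.eq_empty_iff_forall_notMem]
            intro t ht
            rw [Finset.mem_filter, Finset.mem_Ico] at ht
            have htF : t ∈ F := by
              rw [hF, Finset.mem_filter, Finset.mem_Ico]
              exact ⟨⟨by omega, by omega⟩, ht.2⟩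
            have := Finset.le_max' F t htF
            omega
          rw [he] at h2
          simpa using h2
        have hgj : gcnt a j = gcnt a (j - 1) + 1 := by
          have hs := gcnt_step a (show 1 ≤ j - 1 by omega)
          have hj1 : j - 1 + 1 = j := by omega
          rw [hj1] at hs
          rw [hs, if_pos hjd]
        by_cases hfj : (a q : ℤ) - gcnt a q < (a (j - 1) : ℤ) - gcnt a (j - 1)
        · exact ⟨j - 1, by omega, by omega, by omega⟩
        · push_neg at hfj
          have hpj : p < j - 1 := by
            rcases eq_or_lt_of_le (show p ≤ j - 1 by omega) with h | h
            · exfalso; rw [← h] at hfj; omega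
            · exact h
          have hrec : (a (j - 1) : ℤ) - gcnt a (j - 1) < (a p : ℤ) - gcnt a p := by omega
          obtain ⟨u, hu1, hu2, hu3⟩ :=
            IH (j - 1) (by omega) p hp2 hpj (by omega) hrec
          exfalso
          exact hA.2 ⟨u, j - 1, j, hu1, hu2, by omega, by omega, hu3, by
            have hj1 : j - 1 + 1 = j := by omega
            omega⟩

/-- If `f q > f r` for `q < r`, there is `k ∈ (q, r]` with `a k ≤ a q`. -/
lemma lemE (hA : NDelta a n) :
    ∀ m q r, 2 ≤ q → q < r → r ≤ n → r - q ≤ m →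
      (a r : ℤ) - gcnt a r < (a q : ℤ) - gcnt a q →
      ∃ k, q < k ∧ k ≤ r ∧ a k ≤ a q := by
  intro m
  induction m with
  | zero => intro q r _ hqr _ hm _; omega
  | succ m IH =>
    intro q r hq2 hqr hrn hm hf
    by_cases har : a r ≤ a q
    · exact ⟨r, hqr, le_rfl, har⟩
    push_neg at har
    set F := (Finset.Ico (q + 1) (r + 1)).filter (fun j => a j ≤ a (j - 1)) with hF
    have hsplit := gcnt_split a (le_of_lt hqr) (show 1 ≤ q by omega)
    by_cases hFe : F = ∅
    · exfalso
      rw [← hF, hFe] at hsplit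
      simp at hsplit
      omega
    · have hne := Finset.nonempty_iff_ne_empty.mpr hFe
      have hmem := F.min'_mem hne
      set k1 := F.min' hne with hk1
      rw [hF, Finset.mem_filter, Finset.mem_Ico] at hmem
      obtain ⟨⟨hk1q, hk1r1⟩, hk1d⟩ := hmem
      have hg1 : gcnt a (k1 - 1) = gcnt a q := by
        have h2 := gcnt_split a (show q ≤ k1 - 1 by omega) (show 1 ≤ q by omega)
        have he : ((Finset.Ico (q + 1) (k1 - 1 + 1)).filter (fun t => a t ≤ a (t - 1))) = ∅ := by
          rw [Finset.eq_empty_iff_forall_notMem]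
          intro t ht
          rw [Finset.mem_filter, Finset.mem_Ico] at ht
          have htF : t ∈ F := by
            rw [hF, Finset.mem_filter, Finset.mem_Ico]
            exact ⟨⟨by omega, by omega⟩, ht.2⟩
          have := Finset.min'_le F t htF
          omega
        rw [he] at h2
        simpa using h2
      have hgk1 : gcnt a k1 = gcnt a q + 1 := by
        have hs := gcnt_step a (show 1 ≤ k1 - 1 by omega)
        have hj1 : k1 - 1 + 1 = k1 := by omega
        rw [hj1] at hs
        rw [hs, if_pos hk1d, hg1]
      by_cases hk1aq : a k1 ≤ a q
      · exact ⟨k1, by omega, by omega, hk1aq⟩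
      push_neg at hk1aq
      by_cases hk1r : k1 = r
      · exfalso
        rw [hk1r] at hgk1 hk1aq
        omega
      · have hrec : (a r : ℤ) - gcnt a r < (a k1 : ℤ) - gcnt a k1 := by omega
        obtain ⟨k', h1, h2, h3⟩ :=
          IH k1 r (by omega) (by omega) hrn (by omega) hrec
        exfalso
        exact hA.2 ⟨k1 - 1, k1, k', by omega, by omega, h1, by omega, hk1d, by omega⟩

end Stmt4Aux

open Stmt4Aux in
/-- Theorem 3.4: for `(a 1, …, a n) ∈ N(Δ_n)`, the sequence produced by the recursive rule
is a 210-avoiding primitive ascent sequence of length `n+1`: `x 1 = 0`,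
`0 ≤ x (i+1) ≤ asc(x 1 … x i) + 1`, `x i ≠ x (i+1)`, and no `i < j < k` with
`x i > x j > x k`. -/
theorem stmt4 (n : ℕ) (hn : 1 ≤ n) (a : ℕ → ℕ) (hA : NDelta a n)
    (x : ℕ → ℤ) (hx : RecRule a n x) :
    x 1 = 0 ∧
    (∀ i, 1 ≤ i → i ≤ n → 0 ≤ x (i + 1) ∧ x (i + 1) ≤ (ascZ x i : ℤ) + 1) ∧
    (∀ i, 1 ≤ i → i ≤ n → x i ≠ x (i + 1)) ∧
    ¬ ∃ i j k, 1 ≤ i ∧ i < j ∧ j < k ∧ k ≤ n + 1 ∧ x j < x i ∧ x k < x j := by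
  have XV := xval hA hx
  refine ⟨hx.1, ?_, ?_, ?_⟩
  · -- ascent sequence bounds
    intro i h1 hn'
    obtain ⟨hxi, _⟩ := XV i h1 hn'
    have hga := gcnt_le hA h1 hn'
    constructor
    · rw [hxi]; omega
    · rcases eq_or_lt_of_le h1 with h | h
      · rw [← h] at hxi ⊢
        have hasc : ascZ x 1 = 0 := by unfold ascZ; simp
        rw [hx.2.1, hasc]
        norm_num
      · have h2 : 2 ≤ i := h
        obtain ⟨_, hasc⟩ := XV (i - 1) (by omega) (by omega)
        have hi1 : i - 1 + 1 = i := by omega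
        rw [hi1] at hasc
        have hub := (hA.1 i (by omega) hn').2
        have hgs := gcnt_step a (show 1 ≤ i - 1 by omega)
        rw [hi1] at hgs
        have hmono : gcnt a (i - 1) ≤ gcnt a i := by rw [hgs]; split_ifs <;> omega
        rw [hxi, hasc]
        omega
  · -- primitive
    intro i h1 hn' heq
    rcases eq_or_lt_of_le h1 with h | h
    · rw [← h] at heq
      rw [hx.1, hx.2.1] at heq
      norm_num at heq
    · have h2 : 2 ≤ i := h
      obtain ⟨hxi, _⟩ := XV i h1 hn'
      obtain ⟨hxim, _⟩ := XV (i - 1) (by omega) (by omega)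
      have hi1 : i - 1 + 1 = i := by omega
      rw [hi1] at hxim
      have hgs := gcnt_step a (show 1 ≤ i - 1 by omega)
      rw [hi1] at hgs
      rw [hxim, hxi] at heq
      split_ifs at hgs with hd <;> omega
  · -- 210-avoiding
    rintro ⟨i, j, k, h1i, hij, hjk, hk, hji, hkj⟩
    have hnn : ∀ t, 1 ≤ t → t ≤ n + 1 → 0 ≤ x t := by
      intro t ht1 ht2
      rcases eq_or_lt_of_le ht1 with h | h
      · rw [← h, hx.1]
      · obtain ⟨hxt, _⟩ := XV (t - 1) (by omega) (by omega)
        have ht1' : t - 1 + 1 = t := by omega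
        rw [ht1'] at hxt
        have := gcnt_le hA (show 1 ≤ t - 1 by omega) (show t - 1 ≤ n by omega)
        rw [hxt]
        omega
    have hk0 : 0 ≤ x k := hnn k (by omega) hk
    have hxj1 : 1 ≤ x j := by omega
    have hxi2 : 2 ≤ x i := by omega
    have hi3 : 3 ≤ i := by
      by_contra h
      interval_cases i
      · rw [hx.1] at hxi2; omega
      · rw [hx.2.1] at hxi2; omega
    set p := i - 1 with hp
    set q := j - 1 with hq
    set r := k - 1 with hr
    obtain ⟨hxp, _⟩ := XV p (by omega) (by omega)
    obtain ⟨hxq, _⟩ := XV q (by omega) (by omega)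
    obtain ⟨hxr, _⟩ := XV r (by omega) (by omega)
    have hip : i = p + 1 := by omega
    have hjq : j = q + 1 := by omega
    have hkr : k = r + 1 := by omega
    rw [hip, hxp, hjq, hxq] at hji
    rw [hjq, hxq, hkr, hxr] at hkj
    obtain ⟨u, hu1, hu2, hu3⟩ := lemC hA q p (by omega) (by omega) (by omega) hji
    obtain ⟨k', hk'1, hk'2, hk'3⟩ := lemE hA (r - q) q r (by omega) (by omega) (by omega)
      le_rfl hkj
    exact hA.2 ⟨u, q, k', hu1, hu2, hk'1, by omega, hu3, hk'3⟩
end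

section
/- Let n ≥ 1, let (a_1, …, a_n) ∈ N(Δ_n), let x_1, …, x_{n+1} be the sequence produced from (a_1, …, a_n) by the recursive rule, and set a'_i = i + x_{i+1} − asc(x_1 x_2 … x_{i+1}) for 1 ≤ i ≤ n. Then a'_i = a_i for all 1 ≤ i ≤ n. -/
lemma asc2 (x : ℕ → ℤ) (h1 : x 1 = 0) (h2 : x 2 = 1) : ascZ x 2 = 1 := by
  have : Finset.Ico 1 2 = {1} := rfl
  simp [ascZ, this, Finset.filter_singleton, h1, h2]

lemma key_s7 (n : ℕ) (a : ℕ → ℕ) (hA : NDelta a n) (x : ℕ → ℤ) (hx : RecRule a n x) :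
    ∀ i, 2 ≤ i → i ≤ n → (x i < x (i + 1) ↔ a (i - 1) < a i) := by
  obtain ⟨h1, h2, hrec⟩ := hx
  intro i hi
  induction i, hi using Nat.le_induction with
  | base =>
    intro h2n
    have ha1 := hA.1 1 le_rfl (by omega)
    have ha2 := hA.1 2 (by omega) h2n
    have hr := hrec 2 le_rfl h2n
    rw [asc2 x h1 h2] at hr
    simp only [show (2:ℕ) - 1 = 1 from rfl] at hr ⊢
    rw [h2]
    constructor
    · intro hlt
      by_contra hc
      rw [if_neg hc] at hr
      omega
    · intro hlt
      rw [if_pos hlt] at hr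
      omega
  | succ i hi ih =>
    intro hin
    have hi1n : i ≤ n := by omega
    have ihh := ih hi1n
    have hri := hrec i hi hi1n
    have hri1 := hrec (i + 1) (by omega) hin
    have hasc : (ascZ x (i + 1) : ℤ) = (ascZ x i : ℤ) + if a (i - 1) < a i then 1 else 0 := by
      have hd : (if x i < x (i + 1) then (1:ℕ) else 0) = (if a (i - 1) < a i then 1 else 0) := by
        by_cases hc : a (i - 1) < a i
        · rw [if_pos hc, if_pos (ihh.mpr hc)]
        · rw [if_neg hc, if_neg (fun h => hc (ihh.mp h))]
      rw [ascZ_succ x i (by omega), hd]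
      push_cast
      split <;> ring
    simp only [show i + 1 - 1 = i from rfl] at hri1
    rw [hri1, hri, hasc]
    have hai := hA.1 i (by omega) hi1n
    have hai1 := hA.1 (i+1) (by omega) hin
    by_cases hc1 : a (i - 1) < a i <;> by_cases hc2 : a i < a (i + 1) <;>
      simp only [if_pos, if_neg, hc1, hc2, if_true, if_false] <;> push_cast <;> omega

/-- Part of Theorem 3.5 (`φ ∘ φ' = id`): if `(a 1, …, a n) ∈ N(Δ_n)`, `x` is produced from
it by the recursive rule, and `a' i = i + x (i+1) - asc(x 1 … x (i+1))`, then `a' i = a i`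
for all `1 ≤ i ≤ n`. -/
theorem stmt7 (n : ℕ) (hn : 1 ≤ n) (a : ℕ → ℕ) (hA : NDelta a n)
    (x : ℕ → ℤ) (hx : RecRule a n x)
    (a' : ℕ → ℤ)
    (ha' : ∀ i, 1 ≤ i → i ≤ n → a' i = (i : ℤ) + x (i + 1) - (ascZ x (i + 1) : ℤ)) :
    ∀ i, 1 ≤ i → i ≤ n → a' i = (a i : ℤ) := by
  intro i hi1 hin
  obtain ⟨h1, h2, hrec⟩ := hx
  rcases Nat.lt_or_ge i 2 with h | h
  · have hi : i = 1 := by omega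
    subst hi
    rw [ha' 1 le_rfl hin, asc2 x h1 h2, h2]
    have := hA.1 1 le_rfl hin
    push_cast
    omega
  · have hk := key_s7 n a hA x ⟨h1, h2, hrec⟩ i h hin
    have hd : (if x i < x (i + 1) then (1:ℕ) else 0) = if a (i - 1) < a i then 1 else 0 := by
      by_cases hc : a (i - 1) < a i
      · rw [if_pos hc, if_pos (hk.mpr hc)]
      · rw [if_neg hc, if_neg (fun hh => hc (hk.mp hh))]
    rw [ha' i hi1 hin, hrec i h hin, ascZ_succ x i (by omega), hd]
    push_cast
    split_ifs <;> ring
end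

section
/- Let ρ, μ, υ be partitions such that μ is equal to ρ or obtained from ρ by adding a square, and υ is equal to ρ or obtained from ρ by adding a square, let m ∈ {0, 1}, and let λ be the output of the forward local rule applied to (ρ, μ, υ, m). Then: (a) if m = 0 and ρ = υ, then λ = μ; (b) if m = 1 and ρ = υ, then λ is obtained from μ by adding a square; (c) if m = 0 and υ is obtained from ρ by adding a square, then λ is obtained from μ by adding a square. -/
/-- A partition, viewed as a weakly decreasing, eventually-zero sequence
`f 0 ≥ f 1 ≥ …` (with `f i` the `(i+1)`-st part `λ_{i+1}`). -/
def IsPartFn (f : ℕ → ℕ) : Prop :=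
  (∀ i j, i ≤ j → f j ≤ f i) ∧ ∃ N, ∀ i, N ≤ i → f i = 0

/-- `lam` is obtained from `μ` by adding a square: one part grows by 1, the rest agree. -/
def AddSq (μ lam : ℕ → ℕ) : Prop :=
  ∃ j, lam j = μ j + 1 ∧ ∀ i, i ≠ j → lam i = μ i

/-- The carries `a_1, a_2, …` of the forward local rule (0-indexed: `fcarry … i = a_{i+1}`):
`a_1 = m` and `a_{i+1} = min (μ_i + a_i) υ_i - ρ_i`. -/
def fcarry (ρ μ υ : ℕ → ℕ) (m : ℕ) : ℕ → ℕ
  | 0 => m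
  | i + 1 => min (μ i + fcarry ρ μ υ m i) (υ i) - ρ i

/-- The output `λ` of the forward local rule applied to `(ρ, μ, υ, m)`:
`λ_i = max (μ_i + a_i) υ_i` (0-indexed). -/
def frule (ρ μ υ : ℕ → ℕ) (m : ℕ) (i : ℕ) : ℕ :=
  max (μ i + fcarry ρ μ υ m i) (υ i)

lemma le_of_opt (ρ μ : ℕ → ℕ) (h : μ = ρ ∨ AddSq ρ μ) : ∀ i, ρ i ≤ μ i := by
  rcases h with rfl | ⟨j, hj1, hj2⟩
  · exact fun i => le_rfl
  · intro i
    by_cases hij : i = j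
    · subst hij; omega
    · rw [hj2 i hij]

lemma carry_succ_zero (ρ μ υ : ℕ → ℕ) (m : ℕ) (i : ℕ) (h : υ i ≤ ρ i) :
    fcarry ρ μ υ m (i + 1) = 0 := by
  simp only [fcarry]
  omega

lemma carry_zero (ρ μ υ : ℕ → ℕ) (h : ∀ i, min (μ i) (υ i) ≤ ρ i) :
    ∀ i, fcarry ρ μ υ 0 i = 0 := by
  intro i
  induction i with
  | zero => rfl
  | succ n ih =>
    have := h n
    simp only [fcarry, ih, Nat.add_zero]
    omega

/-- Properties (a), (b), (c) in the proof of Lemma 2.3: with `μ` and `υ` each equal to `ρ`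
or obtained from `ρ` by adding a square, and `m ∈ {0,1}`, the output `λ` of the forward
local rule satisfies:
(a) if `m = 0` and `ρ = υ` then `λ = μ`;
(b) if `m = 1` and `ρ = υ` then `λ` is obtained from `μ` by adding a square;
(c) if `m = 0` and `υ` is obtained from `ρ` by adding a square, then `λ` is obtained from
`μ` by adding a square. -/
theorem stmt9 (ρ μ υ : ℕ → ℕ) (hρ : IsPartFn ρ) (hμ : IsPartFn μ) (hυ : IsPartFn υ)
    (hρμ : μ = ρ ∨ AddSq ρ μ) (hρυ : υ = ρ ∨ AddSq ρ υ) (m : ℕ) (hm : m ≤ 1) :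
    (m = 0 → υ = ρ → frule ρ μ υ m = μ) ∧
    (m = 1 → υ = ρ → AddSq μ (frule ρ μ υ m)) ∧
    (m = 0 → AddSq ρ υ → AddSq μ (frule ρ μ υ m)) := by
  have hle : ∀ i, ρ i ≤ μ i := le_of_opt ρ μ hρμ
  refine ⟨?_, ?_, ?_⟩
  · -- (a)
    rintro rfl heq
    rw [heq]
    funext i
    have h0 : fcarry ρ μ ρ 0 i = 0 := by
      cases i with
      | zero => rfl
      | succ n => exact carry_succ_zero ρ μ ρ 0 n le_rfl
    simp only [frule, h0, Nat.add_zero]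
    exact max_eq_left (hle i)
  · -- (b)
    rintro rfl heq
    rw [heq]
    refine ⟨0, ?_, ?_⟩
    · show max (μ 0 + 1) (ρ 0) = μ 0 + 1
      have := hle 0; omega
    · intro i hi
      obtain ⟨n, rfl⟩ := Nat.exists_eq_succ_of_ne_zero hi
      have h0 := carry_succ_zero ρ μ ρ 1 n le_rfl
      simp only [frule, h0, Nat.add_zero]
      exact max_eq_left (hle (n+1))
  · -- (c)
    rintro rfl ⟨k, hk1, hk2⟩
    by_cases hμk : μ k = ρ k
    · -- carry stays zero, square added at k
      have hz : ∀ i, fcarry ρ μ υ 0 i = 0 := by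
        apply carry_zero
        intro i
        by_cases hik : i = k
        · subst hik; rw [hμk]; exact min_le_left _ _
        · rw [hk2 i hik]; exact min_le_right _ _
      refine ⟨k, ?_, ?_⟩
      · simp only [frule, hz, Nat.add_zero, hk1, hμk]
        omega
      · intro i hik
        simp only [frule, hz, Nat.add_zero, hk2 i hik]
        exact max_eq_left (hle i)
    · -- μ k = ρ k + 1: the added squares coincide, carry propagates one step
      obtain ⟨j, hj1, hj2⟩ : AddSq ρ μ := by
        rcases hρμ with rfl | h
        · exact absurd rfl hμk
        · exact h
      have hjk : j = k := by
        by_contra h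
        exact hμk (hj2 k (fun e => h e.symm))
      subst hjk
      -- now μ j = ρ j + 1, μ i = ρ i for i ≠ j; υ j = ρ j + 1, υ i = ρ i for i ≠ j
      have hz : ∀ i, i ≠ j + 1 → fcarry ρ μ υ 0 i = 0 := by
        intro i hi
        cases i with
        | zero => rfl
        | succ n =>
          have hnj : n ≠ j := fun e => hi (by rw [e])
          exact carry_succ_zero ρ μ υ 0 n (le_of_eq (hk2 n hnj))
      have hc1 : fcarry ρ μ υ 0 (j + 1) = 1 := by
        have h0 : fcarry ρ μ υ 0 j = 0 := by
          cases j with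
          | zero => rfl
          | succ n => exact carry_succ_zero ρ μ υ 0 n (le_of_eq (hk2 n (by omega)))
        simp only [fcarry, h0, Nat.add_zero, hj1, hk1]
        omega
      refine ⟨j + 1, ?_, ?_⟩
      · have hne : j + 1 ≠ j := by omega
        simp only [frule, hc1, hk2 (j+1) hne]
        have := hle (j+1)
        omega
      · intro i hi
        have h0 := hz i hi
        simp only [frule, h0, Nat.add_zero]
        by_cases hij : i = j
        · subst hij
          rw [hk1, hj1]
          omega
        · rw [hk2 i hij]
          exact max_eq_left (hle i)
end

section
/- Let ρ, μ, υ be partitions such that μ is equal to ρ or obtained from ρ by adding a square, and υ is equal to ρ or obtained from ρ by adding a square, let m ∈ {0, 1}, and let λ be the output of the forward local rule applied to (ρ, μ, υ, m). Then: (d) if m = 0 and ρ = μ, then λ = υ; (e) if m = 1 and ρ = μ, then λ is obtained from υ by adding a square; (f) if m = 0 and μ is obtained from ρ by adding a square, then λ is obtained from υ by adding a square. -/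
lemma carry_succ (ρ μ υ : ℕ → ℕ) (m i : ℕ) :
    fcarry ρ μ υ m (i + 1) = min (μ i + fcarry ρ μ υ m i) (υ i) - ρ i := rfl

lemma le_of_addsq {ρ υ : ℕ → ℕ} (h : υ = ρ ∨ AddSq ρ υ) : ∀ i, ρ i ≤ υ i := by
  intro i
  rcases h with rfl | ⟨j, hj, ho⟩
  · exact le_rfl
  · by_cases hij : i = j
    · subst hij; omega
    · rw [ho i hij]

/-- if the carry is 0 at `n` and `μ = ρ` from `n` on, carries stay 0 and `λ = υ`. -/
lemma tail_zero (ρ μ υ : ℕ → ℕ) (m n : ℕ)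
    (hμ : ∀ i, n ≤ i → μ i = ρ i) (hρυ : ∀ i, ρ i ≤ υ i)
    (h0 : fcarry ρ μ υ m n = 0) :
    ∀ i, n ≤ i → fcarry ρ μ υ m i = 0 ∧ frule ρ μ υ m i = υ i := by
  have hc : ∀ i, n ≤ i → fcarry ρ μ υ m i = 0 := by
    intro i hi
    induction i, hi using Nat.le_induction with
    | base => exact h0
    | succ i hi ih =>
      rw [carry_succ, ih, hμ i hi, Nat.add_zero, min_eq_left (hρυ i)]
      omega
  intro i hi
  refine ⟨hc i hi, ?_⟩
  rw [frule, hc i hi, hμ i hi, Nat.add_zero, max_eq_right (hρυ i)]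

/-- Properties (d), (e), (f) in the proof of Lemma 2.3: with `μ` and `υ` each equal to `ρ`
or obtained from `ρ` by adding a square, and `m ∈ {0,1}`, the output `λ` of the forward
local rule satisfies:
(d) if `m = 0` and `ρ = μ` then `λ = υ`;
(e) if `m = 1` and `ρ = μ` then `λ` is obtained from `υ` by adding a square;
(f) if `m = 0` and `μ` is obtained from `ρ` by adding a square, then `λ` is obtained from
`υ` by adding a square. -/
theorem stmt10 (ρ μ υ : ℕ → ℕ) (hρ : IsPartFn ρ) (hμ : IsPartFn μ) (hυ : IsPartFn υ)
    (hρμ : μ = ρ ∨ AddSq ρ μ) (hρυ : υ = ρ ∨ AddSq ρ υ) (m : ℕ) (hm : m ≤ 1) :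
    (m = 0 → μ = ρ → frule ρ μ υ m = υ) ∧
    (m = 1 → μ = ρ → AddSq υ (frule ρ μ υ m)) ∧
    (m = 0 → AddSq ρ μ → AddSq υ (frule ρ μ υ m)) := by
  have hle : ∀ i, ρ i ≤ υ i := le_of_addsq hρυ
  refine ⟨?_, ?_, ?_⟩
  · -- (d)
    rintro rfl h
    rw [h]
    funext i
    exact (tail_zero ρ ρ υ 0 0 (fun _ _ => rfl) hle rfl i (Nat.zero_le i)).2
  · -- (e)
    rintro rfl h
    rw [h]
    have ha0 : fcarry ρ ρ υ 1 0 = 1 := rfl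
    by_cases h0 : υ 0 = ρ 0
    · refine ⟨0, ?_, ?_⟩
      · rw [frule, ha0, h0, max_eq_left (by omega)]
      · intro i hi
        have h1 : fcarry ρ ρ υ 1 1 = 0 := by
          rw [carry_succ, ha0, h0, min_eq_right (by omega)]; omega
        have := tail_zero ρ ρ υ 1 1 (fun _ _ => rfl) hle h1
        exact (this i (by omega)).2
    · -- υ adds a square at 0
      obtain ⟨j, hj, ho⟩ : AddSq ρ υ := by
        rcases hρυ with rfl | h; · exact absurd rfl h0
        · exact h
      have hj0 : j = 0 := by
        by_contra hne
        exact h0 (ho 0 (fun h => hne h.symm))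
      subst hj0
      have hυ1 : υ 1 = ρ 1 := ho 1 one_ne_zero
      have ha1 : fcarry ρ ρ υ 1 1 = 1 := by
        rw [carry_succ, ha0, hj, min_self]; omega
      have ha2 : fcarry ρ ρ υ 1 2 = 0 := by
        rw [carry_succ, ha1, hυ1, min_eq_right (by omega)]; omega
      have htail := tail_zero ρ ρ υ 1 2 (fun _ _ => rfl) hle ha2
      refine ⟨1, ?_, ?_⟩
      · rw [frule, ha1, hυ1, max_eq_left (by omega)]
      · intro i hi
        match i, hi with
        | 0, _ => rw [frule, ha0, hj, max_self]
        | (n+2), _ => exact (htail (n+2) (by omega)).2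
  · -- (f)
    rintro rfl ⟨k, hk, hok⟩
    have hpre : ∀ i, i ≤ k → fcarry ρ μ υ 0 i = 0 := by
      intro i hi
      induction i with
      | zero => rfl
      | succ n ih =>
        rw [carry_succ, ih (by omega), hok n (by omega), Nat.add_zero,
          min_eq_left (hle n)]
        omega
    have hpref : ∀ i, i < k → frule ρ μ υ 0 i = υ i := by
      intro i hi
      rw [frule, hpre i (by omega), hok i (by omega), Nat.add_zero,
        max_eq_right (hle i)]
    have hυk : υ k ≤ ρ k + 1 := by
      rcases hρυ with rfl | ⟨j, hj, ho⟩
      · omega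
      · by_cases hij : k = j
        · subst hij; omega
        · rw [ho k hij]; omega
    by_cases h0 : υ k = ρ k
    · refine ⟨k, ?_, ?_⟩
      · rw [frule, hpre k le_rfl, Nat.add_zero, hk, h0, max_eq_left (by omega)]
      · intro i hi
        rcases lt_or_gt_of_ne hi with h | h
        · exact hpref i h
        · have hk1 : fcarry ρ μ υ 0 (k+1) = 0 := by
            rw [carry_succ, hpre k le_rfl, Nat.add_zero, hk, h0,
              min_eq_right (by omega)]
            omega
          exact (tail_zero ρ μ υ 0 (k+1) (fun i hi => hok i (by omega)) hle hk1
            i (by omega)).2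
    · -- υ adds a square at k
      obtain ⟨j, hj, ho⟩ : AddSq ρ υ := by
        rcases hρυ with rfl | h; · exact absurd rfl h0
        · exact h
      have hjk : j = k := by
        by_contra hne
        exact h0 (ho k (fun h => hne h.symm))
      subst hjk
      have hυk1 : υ (j+1) = ρ (j+1) := ho (j+1) (by omega)
      have hμk1 : μ (j+1) = ρ (j+1) := hok (j+1) (by omega)
      have ha1 : fcarry ρ μ υ 0 (j+1) = 1 := by
        rw [carry_succ, hpre j le_rfl, Nat.add_zero, hk, hj, min_self]; omega
      have ha2 : fcarry ρ μ υ 0 (j+2) = 0 := by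
        rw [carry_succ, ha1, hμk1, hυk1, min_eq_right (by omega)]; omega
      have htail := tail_zero ρ μ υ 0 (j+2) (fun i hi => hok i (by omega)) hle ha2
      refine ⟨j+1, ?_, ?_⟩
      · rw [frule, ha1, hμk1, hυk1, max_eq_left (by omega)]
      · intro i hi
        rcases lt_trichotomy i j with h | rfl | h
        · exact hpref i h
        · rw [frule, hpre i le_rfl, Nat.add_zero, hk, hj, max_self]
        · exact (htail i (by omega)).2
end

section
/- For every n ≥ 0 and every k ≥ 1, the number of k-nonnesting set partitions of [n+1] = {1, …, n+1} equals the number of 01-fillings of the staircase shape Δ_n with at most one 1 per row and per column containing no NE-chain of length k. -/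
/-- `P` is a set partition of `{1, …, n}` (modeled on `Fin n`): a collection of nonempty
pairwise disjoint blocks whose union is everything. -/
def IsSetPartition {n : ℕ} (P : Finset (Finset (Fin n))) : Prop :=
  (∀ B ∈ P, B.Nonempty) ∧
  (∀ B ∈ P, ∀ C ∈ P, B ≠ C → Disjoint B C) ∧
  (∀ x : Fin n, ∃ B ∈ P, x ∈ B)

/-- `(a, b)` is an arc of the set partition `P`: `a < b` lie in a common block and no
element of that block lies strictly between them. -/
def IsArc {n : ℕ} (P : Finset (Finset (Fin n))) (a b : Fin n) : Prop :=
  a < b ∧ ∃ B ∈ P, a ∈ B ∧ b ∈ B ∧ ∀ c ∈ B, ¬(a < c ∧ c < b)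

/-- `P` is `k`-nonnesting: there are no `k` arcs `(i_1, j_1), …, (i_k, j_k)` with
`i_1 < i_2 < … < i_k < j_k < … < j_2 < j_1`. -/
def Nonnesting {n : ℕ} (k : ℕ) (P : Finset (Finset (Fin n))) : Prop :=
  ¬ ∃ i j : Fin k → Fin n, (∀ t, IsArc P (i t) (j t)) ∧
    (∀ s t, s < t → i s < i t) ∧ (∀ s t, s < t → j t < j s) ∧ (∀ s t, i s < j t)

/-- A 01-filling of the staircase shape `Δ_n` with at most one 1 per row and per column:
a set `S` of cells `(r, c)` with `1 ≤ c ≤ r ≤ n`, no two sharing a row and no two sharing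
a column. -/
def IsFilling (n : ℕ) (S : Finset (ℕ × ℕ)) : Prop :=
  (∀ p ∈ S, 1 ≤ p.2 ∧ p.2 ≤ p.1 ∧ p.1 ≤ n) ∧
  (∀ p ∈ S, ∀ q ∈ S, p.1 = q.1 → p = q) ∧
  (∀ p ∈ S, ∀ q ∈ S, p.2 = q.2 → p = q)

/-- `S` contains an NE-chain of length `k`: cells `(r_1, c_1), …, (r_k, c_k) ∈ S` with
`r_1 > r_2 > … > r_k` and `c_1 ≤ c_2 ≤ … ≤ c_k`. -/
def NEChain (S : Finset (ℕ × ℕ)) (k : ℕ) : Prop :=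
  ∃ f : Fin k → ℕ × ℕ, (∀ t, f t ∈ S) ∧
    (∀ s t : Fin k, s < t → (f t).1 < (f s).1) ∧
    (∀ s t : Fin k, s < t → (f s).2 ≤ (f t).2)

section Aux

open Finset

variable {n : ℕ}

open Classical in
/-- the set of arcs of a partition, as a finset of pairs -/
noncomputable def arcSet (P : Finset (Finset (Fin n))) : Finset (Fin n × Fin n) :=
  Finset.univ.filter (fun p => IsArc P p.1 p.2)

/-- the filling associated to a partition -/
noncomputable def toFill (P : Finset (Finset (Fin n))) : Finset (ℕ × ℕ) :=
  (arcSet P).image (fun p => ((p.2 : ℕ), (p.1 : ℕ) + 1))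

lemma mem_toFill {P : Finset (Finset (Fin n))} {q : ℕ × ℕ} :
    q ∈ toFill P ↔ ∃ a b : Fin n, IsArc P a b ∧ ((b : ℕ), (a : ℕ) + 1) = q := by
  classical
  simp only [toFill, arcSet, Finset.mem_image, Finset.mem_filter, Finset.mem_univ, true_and,
    Prod.exists]

lemma block_eq {P : Finset (Finset (Fin n))} (hP : IsSetPartition P)
    {B C : Finset (Fin n)} {x : Fin n} (hB : B ∈ P) (hC : C ∈ P)
    (hxB : x ∈ B) (hxC : x ∈ C) : B = C := by
  by_contra h
  exact Finset.disjoint_left.mp (hP.2.1 B hB C hC h) hxB hxC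

lemma arc_right_unique {P : Finset (Finset (Fin n))} (hP : IsSetPartition P)
    {a b b' : Fin n} (h : IsArc P a b) (h' : IsArc P a b') : b = b' := by
  obtain ⟨hab, B, hB, haB, hbB, hno⟩ := h
  obtain ⟨hab', B', hB', haB', hbB', hno'⟩ := h'
  have hBB : B = B' := block_eq hP hB hB' haB haB'
  subst hBB
  rcases lt_trichotomy b b' with h | h | h
  · exact absurd ⟨hab, h⟩ (hno' b hbB)
  · exact h
  · exact absurd ⟨hab', h⟩ (hno b' hbB')

lemma arc_left_unique {P : Finset (Finset (Fin n))} (hP : IsSetPartition P)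
    {a a' b : Fin n} (h : IsArc P a b) (h' : IsArc P a' b) : a = a' := by
  obtain ⟨hab, B, hB, haB, hbB, hno⟩ := h
  obtain ⟨hab', B', hB', haB', hbB', hno'⟩ := h'
  have hBB : B = B' := block_eq hP hB hB' hbB hbB'
  subst hBB
  rcases lt_trichotomy a a' with h | h | h
  · exact absurd ⟨h, hab'⟩ (hno a' haB')
  · exact h
  · exact absurd ⟨h, hab⟩ (hno' a haB)

end Aux

section Aux2

variable {n k : ℕ}

lemma isFilling_toFill {P : Finset (Finset (Fin (n + 1)))} (hP : IsSetPartition P) :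
    IsFilling n (toFill P) := by
  refine ⟨?_, ?_, ?_⟩
  · intro q hq
    obtain ⟨a, b, hab, rfl⟩ := mem_toFill.mp hq
    have h1 : (a : ℕ) < (b : ℕ) := hab.1
    have h2 : (b : ℕ) ≤ n := Nat.lt_succ_iff.mp b.isLt
    exact ⟨by omega, by omega, by omega⟩
  · intro q hq q' hq' hrow
    obtain ⟨a, b, hab, rfl⟩ := mem_toFill.mp hq
    obtain ⟨a', b', hab', rfl⟩ := mem_toFill.mp hq'
    have hb : b = b' := Fin.ext hrow
    subst hb
    have : a = a' := arc_left_unique hP hab hab'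
    subst this; rfl
  · intro q hq q' hq' hcol
    obtain ⟨a, b, hab, rfl⟩ := mem_toFill.mp hq
    obtain ⟨a', b', hab', rfl⟩ := mem_toFill.mp hq'
    have ha : a = a' := Fin.ext (by simpa using hcol)
    subst ha
    have : b = b' := arc_right_unique hP hab hab'
    subst this; rfl

lemma chain_of_nesting {P : Finset (Finset (Fin (n + 1)))}
    (i j : Fin k → Fin (n + 1)) (harc : ∀ t, IsArc P (i t) (j t))
    (hi : ∀ s t, s < t → i s < i t) (hj : ∀ s t, s < t → j t < j s) :
    NEChain (toFill P) k := by
  refine ⟨fun t => ((j t : ℕ), (i t : ℕ) + 1), fun t => mem_toFill.mpr ⟨i t, j t, harc t, rfl⟩,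
    ?_, ?_⟩
  · intro s t hst; exact hj s t hst
  · intro s t hst; simpa using (hi s t hst).le

lemma nesting_of_chain (hk : 1 ≤ k) {P : Finset (Finset (Fin (n + 1)))}
    (hP : IsSetPartition P) (h : NEChain (toFill P) k) : ¬ Nonnesting k P := by
  obtain ⟨f, hf, hrow, hcol⟩ := h
  have hmem : ∀ t, ∃ a b : Fin (n + 1), IsArc P a b ∧ ((b : ℕ), (a : ℕ) + 1) = f t :=
    fun t => mem_toFill.mp (hf t)
  choose a b harc heq using hmem
  have hr : ∀ t, (f t).1 = (b t : ℕ) := fun t => by rw [← heq t]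
  have hc : ∀ t, (f t).2 = (a t : ℕ) + 1 := fun t => by rw [← heq t]
  have hj : ∀ s t, s < t → b t < b s := by
    intro s t hst
    have := hrow s t hst
    rw [hr s, hr t] at this
    exact this
  have hi : ∀ s t, s < t → a s < a t := by
    intro s t hst
    have h1 := hcol s t hst
    rw [hc s, hc t] at h1
    have h2 : (a s : ℕ) ≤ (a t : ℕ) := by omega
    rcases lt_or_eq_of_le h2 with h3 | h3
    · exact h3
    · exfalso
      have : a s = a t := Fin.ext h3
      have hbb : b s = b t := arc_right_unique hP (harc s) (this ▸ harc t)
      exact absurd hbb (hj s t hst).ne'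
  intro hnn
  refine hnn ⟨a, b, harc, hi, hj, ?_⟩
  intro s t
  have hm : k - 1 < k := by omega
  set m : Fin k := ⟨k - 1, hm⟩ with hmdef
  have hsm' : s ≤ m := by rw [Fin.le_def]; exact Nat.le_pred_of_lt s.isLt
  have htm' : t ≤ m := by rw [Fin.le_def]; exact Nat.le_pred_of_lt t.isLt
  have hsm : a s ≤ a m := by
    rcases eq_or_lt_of_le hsm' with h | h
    · rw [h]
    · exact (hi s m h).le
  have htm : b m ≤ b t := by
    rcases eq_or_lt_of_le htm' with h | h
    · rw [h]
    · exact (hj t m h).le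
  exact lt_of_le_of_lt hsm (lt_of_lt_of_le (harc m).1 htm)

end Aux2

section Aux3

variable {n : ℕ}

/-- one step of the successor relation encoded by a filling -/
def fstep (n : ℕ) (S : Finset (ℕ × ℕ)) (a b : Fin (n + 1)) : Prop :=
  a < b ∧ ((b : ℕ), (a : ℕ) + 1) ∈ S

def freach (n : ℕ) (S : Finset (ℕ × ℕ)) : Fin (n + 1) → Fin (n + 1) → Prop :=
  Relation.ReflTransGen (fstep n S)

def frel (n : ℕ) (S : Finset (ℕ × ℕ)) (x y : Fin (n + 1)) : Prop :=
  freach n S x y ∨ freach n S y x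

open Classical in
noncomputable def cls (n : ℕ) (S : Finset (ℕ × ℕ)) (x : Fin (n + 1)) : Finset (Fin (n + 1)) :=
  Finset.univ.filter (fun y => frel n S x y)

noncomputable def toPart (n : ℕ) (S : Finset (ℕ × ℕ)) : Finset (Finset (Fin (n + 1))) :=
  Finset.univ.image (cls n S)

lemma mem_cls {S : Finset (ℕ × ℕ)} {x y : Fin (n + 1)} :
    y ∈ cls n S x ↔ frel n S x y := by
  classical
  simp [cls]

variable {S : Finset (ℕ × ℕ)}

lemma fstep_right_unique (hS : IsFilling n S) {a b b' : Fin (n + 1)}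
    (h : fstep n S a b) (h' : fstep n S a b') : b = b' := by
  have := hS.2.2 _ h.2 _ h'.2 rfl
  exact Fin.ext (congrArg Prod.fst this)

lemma fstep_left_unique (hS : IsFilling n S) {a a' b : Fin (n + 1)}
    (h : fstep n S a b) (h' : fstep n S a' b) : a = a' := by
  have := hS.2.1 _ h.2 _ h'.2 rfl
  have h2 : (a : ℕ) + 1 = (a' : ℕ) + 1 := congrArg Prod.snd this
  exact Fin.ext (by omega)

lemma freach_le {x y : Fin (n + 1)} (h : freach n S x y) : x ≤ y := by
  induction h with
  | refl => exact le_refl _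
  | tail h1 h2 ih => exact le_trans ih h2.1.le

lemma freach_confl_out (hS : IsFilling n S) {x y z : Fin (n + 1)}
    (hxy : freach n S x y) (hxz : freach n S x z) :
    freach n S y z ∨ freach n S z y := by
  revert hxz
  induction hxy using Relation.ReflTransGen.head_induction_on with
  | refl => intro h; exact Or.inl h
  | head h' hcb ih =>
    rename_i a c
    intro haz
    rcases Relation.ReflTransGen.cases_head haz with rfl | ⟨w, haw, hwz⟩
    · exact Or.inr (Relation.ReflTransGen.head h' hcb)
    · have : w = c := fstep_right_unique hS haw h'
      exact ih (this ▸ hwz)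

lemma freach_confl_in (hS : IsFilling n S) {x y : Fin (n + 1)}
    (hyx : freach n S y x) : ∀ z, freach n S z x →
    freach n S y z ∨ freach n S z y := by
  induction hyx with
  | refl => intro z hz; exact Or.inr hz
  | tail h1 h2 ih =>
    rename_i w x'
    intro z hz
    rcases Relation.ReflTransGen.cases_tail hz with rfl | ⟨c, hzc, hcx⟩
    · exact Or.inl (Relation.ReflTransGen.tail h1 h2)
    · have : c = w := fstep_left_unique hS hcx h2
      exact ih z (this ▸ hzc)

lemma frel_refl (x : Fin (n + 1)) : frel n S x x := Or.inl Relation.ReflTransGen.refl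

lemma frel_symm {x y : Fin (n + 1)} (h : frel n S x y) : frel n S y x := h.symm

lemma frel_trans (hS : IsFilling n S) {x y z : Fin (n + 1)}
    (h1 : frel n S x y) (h2 : frel n S y z) : frel n S x z := by
  rcases h1 with h1 | h1 <;> rcases h2 with h2 | h2
  · exact Or.inl (h1.trans h2)
  · exact freach_confl_in hS h1 z h2
  · exact freach_confl_out hS h1 h2
  · exact Or.inr (h2.trans h1)

lemma cls_eq_of_frel (hS : IsFilling n S) {x y : Fin (n + 1)} (h : frel n S x y) :
    cls n S x = cls n S y := by
  ext z
  rw [mem_cls, mem_cls]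
  exact ⟨fun hz => frel_trans hS (frel_symm h) hz, fun hz => frel_trans hS h hz⟩

lemma toPart_isSetPartition (hS : IsFilling n S) : IsSetPartition (toPart n S) := by
  refine ⟨?_, ?_, ?_⟩
  · intro B hB
    obtain ⟨x, _, rfl⟩ := Finset.mem_image.mp hB
    exact ⟨x, mem_cls.mpr (frel_refl x)⟩
  · intro B hB C hC hne
    obtain ⟨x, _, rfl⟩ := Finset.mem_image.mp hB
    obtain ⟨y, _, rfl⟩ := Finset.mem_image.mp hC
    rw [Finset.disjoint_left]
    intro z hz hz'
    exact hne (by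
      rw [cls_eq_of_frel hS (mem_cls.mp hz)]
      rw [cls_eq_of_frel hS (mem_cls.mp hz')])
  · intro x
    exact ⟨cls n S x, Finset.mem_image.mpr ⟨x, Finset.mem_univ x, rfl⟩,
      mem_cls.mpr (frel_refl x)⟩

lemma isArc_toPart_iff (hS : IsFilling n S) {a b : Fin (n + 1)} :
    IsArc (toPart n S) a b ↔ fstep n S a b := by
  constructor
  · rintro ⟨hab, B, hB, haB, hbB, hno⟩
    obtain ⟨x, _, rfl⟩ := Finset.mem_image.mp hB
    have hra : frel n S x a := mem_cls.mp haB
    have hrb : frel n S x b := mem_cls.mp hbB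
    have hrel : frel n S a b := frel_trans hS (frel_symm hra) hrb
    have hreach : freach n S a b := by
      rcases hrel with h | h
      · exact h
      · exact absurd (freach_le h) (not_le.mpr hab)
    rcases Relation.ReflTransGen.cases_head hreach with rfl | ⟨m, ham, hmb⟩
    · exact absurd rfl hab.ne
    · have hmB : m ∈ cls n S x :=
        mem_cls.mpr (frel_trans hS hra (Or.inl (Relation.ReflTransGen.single ham)))
      have := hno m hmB
      have hmb' : m ≤ b := freach_le hmb
      have : m = b := by
        rcases eq_or_lt_of_le hmb' with h | h
        · exact h
        · exact absurd ⟨ham.1, h⟩ this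
      exact this ▸ ham
  · intro hstep
    refine ⟨hstep.1, cls n S a, Finset.mem_image.mpr ⟨a, Finset.mem_univ a, rfl⟩,
      mem_cls.mpr (frel_refl a),
      mem_cls.mpr (Or.inl (Relation.ReflTransGen.single hstep)), ?_⟩
    rintro c hc ⟨h1, h2⟩
    rcases mem_cls.mp hc with h | h
    · rcases Relation.ReflTransGen.cases_head h with rfl | ⟨m, ham, hmc⟩
      · exact absurd rfl h1.ne
      · have : m = b := fstep_right_unique hS ham hstep
        subst this
        exact absurd (freach_le hmc) (not_le.mpr h2)
    · exact absurd (freach_le h) (not_le.mpr h1)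

lemma toFill_toPart (hS : IsFilling n S) : toFill (toPart n S) = S := by
  ext q
  rw [mem_toFill]
  constructor
  · rintro ⟨a, b, harc, rfl⟩
    exact ((isArc_toPart_iff hS).mp harc).2
  · intro hq
    obtain ⟨h1, h2, h3⟩ := hS.1 q hq
    refine ⟨⟨q.2 - 1, by omega⟩, ⟨q.1, by omega⟩, ?_, ?_⟩
    · refine (isArc_toPart_iff hS).mpr ⟨?_, ?_⟩
      · rw [Fin.lt_def]; simp only []; omega
      · simp only []
        have : ((q.1 : ℕ), q.2 - 1 + 1) = q := by
          obtain ⟨r, c⟩ := q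
          simp at h1 h2 h3 ⊢
          omega
        rwa [this]
    · obtain ⟨r, c⟩ := q
      simp at h1 h2 h3 ⊢
      omega

end Aux3

section Aux4

variable {n : ℕ} {P : Finset (Finset (Fin (n + 1)))}

/-- the block containing `x` -/
noncomputable def blk (hP : IsSetPartition P) (x : Fin (n + 1)) : Finset (Fin (n + 1)) :=
  (hP.2.2 x).choose

lemma blk_mem (hP : IsSetPartition P) (x : Fin (n + 1)) : blk hP x ∈ P :=
  (hP.2.2 x).choose_spec.1

lemma mem_blk (hP : IsSetPartition P) (x : Fin (n + 1)) : x ∈ blk hP x :=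
  (hP.2.2 x).choose_spec.2

lemma fstep_toFill_iff {a b : Fin (n + 1)} :
    fstep n (toFill P) a b ↔ IsArc P a b := by
  constructor
  · rintro ⟨hab, hcell⟩
    obtain ⟨a', b', harc, heq⟩ := mem_toFill.mp hcell
    have hb : b' = b := Fin.ext (congrArg Prod.fst heq)
    have ha : a' = a := Fin.ext (by
      have := congrArg Prod.snd heq
      simpa using this)
    rw [← ha, ← hb]; exact harc
  · intro h
    exact ⟨h.1, mem_toFill.mpr ⟨a, b, h, rfl⟩⟩

lemma blk_of_freach (hP : IsSetPartition P) {x y : Fin (n + 1)}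
    (h : freach n (toFill P) x y) : y ∈ blk hP x := by
  induction h with
  | refl => exact mem_blk hP x
  | tail h1 h2 ih =>
    rename_i w y'
    obtain ⟨_, B', hB', hwB', hyB', _⟩ := fstep_toFill_iff.mp h2
    have : blk hP x = B' := block_eq hP (blk_mem hP x) hB' ih hwB'
    rw [this]; exact hyB'

lemma freach_of_blk (hP : IsSetPartition P) {B : Finset (Fin (n + 1))} (hB : B ∈ P) :
    ∀ d : ℕ, ∀ x y : Fin (n + 1), (y : ℕ) - (x : ℕ) = d → x ≤ y → x ∈ B → y ∈ B →
      freach n (toFill P) x y := by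
  intro d
  induction d using Nat.strong_induction_on with
  | _ d ih =>
    intro x y hd hxy hxB hyB
    rcases eq_or_lt_of_le hxy with h | h
    · rw [← h]; exact Relation.ReflTransGen.refl
    · classical
      set T := B.filter (fun z => x < z) with hT
      have hyT : y ∈ T := Finset.mem_filter.mpr ⟨hyB, h⟩
      have hTne : T.Nonempty := ⟨y, hyT⟩
      set m := T.min' hTne with hm
      have hmT := T.min'_mem hTne
      rw [Finset.mem_filter] at hmT
      have harc : IsArc P x m := by
        refine ⟨hmT.2, B, hB, hxB, hmT.1, ?_⟩
        rintro c hc ⟨h1, h2⟩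
        exact absurd (T.min'_le c (Finset.mem_filter.mpr ⟨hc, h1⟩)) (not_le.mpr h2)
      have hmy : m ≤ y := T.min'_le y hyT
      have hxm : (x : ℕ) < (m : ℕ) := hmT.2
      have hrest : freach n (toFill P) m y := by
        refine ih ((y : ℕ) - (m : ℕ)) ?_ m y rfl hmy hmT.1 hyB
        have : (m : ℕ) ≤ (y : ℕ) := hmy
        have hxy' : (x : ℕ) < (y : ℕ) := h
        omega
      exact Relation.ReflTransGen.head (fstep_toFill_iff.mpr harc) hrest

lemma cls_toFill (hP : IsSetPartition P) (x : Fin (n + 1)) :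
    cls n (toFill P) x = blk hP x := by
  ext y
  rw [mem_cls]
  constructor
  · rintro (h | h)
    · exact blk_of_freach hP h
    · have hx : x ∈ blk hP y := blk_of_freach hP h
      have : blk hP x = blk hP y :=
        block_eq hP (blk_mem hP x) (blk_mem hP y) (mem_blk hP x) hx
      rw [this]; exact mem_blk hP y
  · intro hy
    rcases le_total x y with h | h
    · exact Or.inl (freach_of_blk hP (blk_mem hP x) _ x y rfl h (mem_blk hP x) hy)
    · exact Or.inr (freach_of_blk hP (blk_mem hP x) _ y x rfl h hy (mem_blk hP x))

lemma toPart_toFill (hP : IsSetPartition P) : toPart n (toFill P) = P := by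
  ext B
  simp only [toPart, Finset.mem_image, Finset.mem_univ, true_and]
  constructor
  · rintro ⟨x, rfl⟩
    rw [cls_toFill hP]
    exact blk_mem hP x
  · intro hB
    obtain ⟨x, hx⟩ := hP.1 B hB
    exact ⟨x, by rw [cls_toFill hP]; exact block_eq hP (blk_mem hP x) hB (mem_blk hP x) hx⟩

end Aux4

/-- Theorem 2.8: for every `n ≥ 0` and `k ≥ 1`, `k`-nonnesting set partitions of
`{1, …, n+1}` are equinumerous with 01-fillings of `Δ_n` with at most one 1 per row and
per column and no NE-chain of length `k`. -/
theorem stmt13 (n k : ℕ) (hk : 1 ≤ k) :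
    {P : Finset (Finset (Fin (n + 1))) | IsSetPartition P ∧ Nonnesting k P}.ncard =
    {S : Finset (ℕ × ℕ) | IsFilling n S ∧ ¬ NEChain S k}.ncard := by
  have himg : {S : Finset (ℕ × ℕ) | IsFilling n S ∧ ¬ NEChain S k} =
      toFill '' {P : Finset (Finset (Fin (n + 1))) | IsSetPartition P ∧ Nonnesting k P} := by
    ext S
    simp only [Set.mem_setOf_eq, Set.mem_image]
    constructor
    · rintro ⟨hS, hchain⟩
      refine ⟨toPart n S, ⟨toPart_isSetPartition hS, ?_⟩, toFill_toPart hS⟩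
      rintro ⟨i, j, h1, h2, h3, _⟩
      exact hchain (by
        rw [← toFill_toPart hS]
        exact chain_of_nesting i j h1 h2 h3)
    · rintro ⟨P, ⟨hP, hnn⟩, rfl⟩
      exact ⟨isFilling_toFill hP, fun hc => nesting_of_chain hk hP hc hnn⟩
  rw [himg, Set.ncard_image_of_injOn]
  intro P hP Q hQ h
  have h2 := congrArg (toPart n) h
  rwa [toPart_toFill hP.1, toPart_toFill hQ.1] at h2
end

section
/- For every n ≥ 0, the number of sequences (a_1, …, a_n) with 1 ≤ a_i ≤ i for all i equals the number of sequences (λ^0, λ^1, …, λ^{2n}) of partitions with λ^0 = λ^{2n} = ∅ such that for each i, λ^{2i+1} is obtained from λ^{2i} by adding a (possibly empty) horizontal strip, and λ^{2i+2} is obtained from λ^{2i+1} by deleting exactly one square. -/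
/-- A partition: a weakly decreasing, eventually-zero sequence of nonnegative integers
(`parts i` is the `(i+1)`-st part `λ_{i+1}`). -/
structure Partn where
  parts : ℕ → ℕ
  antitone : ∀ i j, i ≤ j → parts j ≤ parts i
  eventually_zero : ∃ N, ∀ i, N ≤ i → parts i = 0

/-- The empty partition `∅`. -/
def Partn.empty : Partn :=
  ⟨fun _ => 0, fun _ _ _ => le_rfl, ⟨0, fun _ _ => rfl⟩⟩

/-- `lam` is obtained from `μ` by adding a square (equivalently, `μ` is obtained from
`lam` by deleting a square): one part grows by 1 and all other parts agree. -/
def AddSqP (μ lam : Partn) : Prop :=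
  ∃ j, lam.parts j = μ.parts j + 1 ∧ ∀ i, i ≠ j → lam.parts i = μ.parts i

/-- `lam` is obtained from `μ` by adding a (possibly empty) horizontal strip:
`μ_i ≤ λ_i` and `λ_{i+1} ≤ μ_i` for all `i`. -/
def HStrip (μ lam : Partn) : Prop :=
  ∀ j, μ.parts j ≤ lam.parts j ∧ lam.parts (j + 1) ≤ μ.parts j

namespace PfAux

theorem Partn.ext' {p q : Partn} (h : ∀ i, p.parts i = q.parts i) : p = q := by
  cases p; cases q; simp only [Partn.mk.injEq]; exact funext h

/-- a canonical bound beyond which parts vanish -/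
noncomputable def bnd (μ : Partn) : ℕ := Classical.choose μ.eventually_zero

theorem bnd_spec (μ : Partn) : ∀ i, bnd μ ≤ i → μ.parts i = 0 :=
  Classical.choose_spec μ.eventually_zero

theorem empty_parts (i : ℕ) : Partn.empty.parts i = 0 := rfl

theorem eq_empty_of_le {μ : Partn} (h : ∀ i, μ.parts i ≤ 0) : μ = Partn.empty :=
  Partn.ext' fun i => Nat.le_zero.mp (h i)

/-- finiteness of pointwise-bounded sets of partitions -/
theorem finite_bounded (b : ℕ → ℕ) (N : ℕ) (hb : ∀ i, N ≤ i → b i = 0) :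
    {p : Partn | ∀ i, p.parts i ≤ b i}.Finite := by
  have : Set.Finite (Set.univ : Set (∀ i : Fin N, Fin (b i + 1))) := Set.finite_univ
  apply Set.Finite.of_finite_image
    (f := fun p => fun i : Fin N => (⟨min (p.parts i) (b i), Nat.lt_succ_of_le (min_le_right _ _)⟩ : Fin (b i + 1)))
  · exact Set.Finite.subset this (Set.subset_univ _)
  · intro p hp q hq hpq
    apply Partn.ext'
    intro i
    by_cases hi : i < N
    · have h := congrArg Fin.val (congrFun hpq ⟨i, hi⟩)
      simp only [min_eq_left (hp i), min_eq_left (hq i)] at h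
      exact h
    · push_neg at hi
      have h1 : p.parts i ≤ b i := hp i
      have h2 : q.parts i ≤ b i := hq i
      rw [hb i hi] at h1 h2; omega

/-- `j` is an addable position for `μ` -/
def addable (μ : Partn) (j : ℕ) : Prop := ∀ k, j = k + 1 → μ.parts j < μ.parts k

/-- `j` is a removable position for `μ` -/
def delable (μ : Partn) (j : ℕ) : Prop := μ.parts (j + 1) < μ.parts j

open Classical in
noncomputable def addCell (μ : Partn) (j : ℕ) : Partn :=
  if h : addable μ j then
    ⟨fun i => if i = j then μ.parts j + 1 else μ.parts i, by
      intro a b hab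
      by_cases hb : b = j
      · by_cases ha : a = j
        · rw [if_pos ha, if_pos hb]
        · rw [if_pos hb, if_neg ha]
          have hj1 : a + 1 ≤ j := by omega
          have h2 := h (j-1) (by omega)
          have h3 := μ.antitone a (j-1) (by omega)
          omega
      · by_cases ha : a = j
        · rw [if_neg hb, if_pos ha]
          have := μ.antitone j b (by omega)
          omega
        · rw [if_neg hb, if_neg ha]
          exact μ.antitone a b hab, by
      obtain ⟨N, hN⟩ := μ.eventually_zero
      exact ⟨max N (j+1), fun i hi => by
        rw [if_neg (by omega : ¬ i = j)]
        exact hN i (by omega)⟩⟩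
  else μ

open Classical in
noncomputable def delCell (μ : Partn) (j : ℕ) : Partn :=
  if h : delable μ j then
    ⟨fun i => if i = j then μ.parts j - 1 else μ.parts i, by
      intro a b hab
      unfold delable at h
      by_cases hb : b = j
      · by_cases ha : a = j
        · rw [if_pos ha, if_pos hb]
        · rw [if_pos hb, if_neg ha]
          have := μ.antitone a j (by omega)
          omega
      · by_cases ha : a = j
        · rw [if_neg hb, if_pos ha]
          have := μ.antitone (j+1) b (by omega)
          omega
        · rw [if_neg hb, if_neg ha]
          exact μ.antitone a b hab, by
      obtain ⟨N, hN⟩ := μ.eventually_zero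
      exact ⟨max N (j+1), fun i hi => by
        rw [if_neg (by omega : ¬ i = j)]
        exact hN i (by omega)⟩⟩
  else μ

theorem addCell_parts {μ : Partn} {j : ℕ} (h : addable μ j) (i : ℕ) :
    (addCell μ j).parts i = if i = j then μ.parts j + 1 else μ.parts i := by
  simp [addCell, h]

theorem delCell_parts {μ : Partn} {j : ℕ} (h : delable μ j) (i : ℕ) :
    (delCell μ j).parts i = if i = j then μ.parts j - 1 else μ.parts i := by
  simp [delCell, h]

/-- characterization: `lam = μ + square` iff `lam = addCell μ j` for an addable `j` -/
theorem addSq_iff {μ lam : Partn} :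
    AddSqP μ lam ↔ ∃ j, addable μ j ∧ lam = addCell μ j := by
  constructor
  · rintro ⟨j, hj, hne⟩
    have hadd : addable μ j := by
      intro k hk
      have h1 : lam.parts j ≤ lam.parts k := lam.antitone k j (by omega)
      have h2 : lam.parts k = μ.parts k := hne k (by omega)
      omega
    refine ⟨j, hadd, Partn.ext' fun i => ?_⟩
    rw [addCell_parts hadd]
    by_cases hij : i = j
    · rw [if_pos hij, hij, hj]
    · rw [if_neg hij]; exact hne i hij
  · rintro ⟨j, hadd, rfl⟩
    refine ⟨j, ?_, fun i hi => ?_⟩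
    · rw [addCell_parts hadd, if_pos rfl]
    · rw [addCell_parts hadd, if_neg hi]

/-- characterization: `ρ = μ − square` iff `ρ = delCell μ j` for a removable `j` -/
theorem delSq_iff {μ ρ : Partn} :
    AddSqP ρ μ ↔ ∃ j, delable μ j ∧ ρ = delCell μ j := by
  constructor
  · rintro ⟨j, hj, hne⟩
    have hdel : delable μ j := by
      have h1 : μ.parts (j+1) = ρ.parts (j+1) := hne (j+1) (by omega)
      have h2 : ρ.parts (j+1) ≤ ρ.parts j := ρ.antitone j (j+1) (by omega)
      unfold delable; omega
    refine ⟨j, hdel, Partn.ext' fun i => ?_⟩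
    rw [delCell_parts hdel]
    by_cases hij : i = j
    · rw [if_pos hij, hij, hj]; omega
    · rw [if_neg hij]; exact (hne i hij).symm
  · rintro ⟨j, hdel, rfl⟩
    have hd : delable μ j := hdel
    unfold delable at hd
    refine ⟨j, ?_, fun i hi => ?_⟩
    · rw [delCell_parts hdel, if_pos rfl]; omega
    · rw [delCell_parts hdel, if_neg hi]

theorem addCell_injOn (μ : Partn) : Set.InjOn (addCell μ) {j | addable μ j} := by
  intro j hj k hk hjk
  by_contra hne
  have h1 := congrArg (fun p => Partn.parts p j) hjk
  rw [addCell_parts hj, addCell_parts hk, if_pos rfl, if_neg hne] at h1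
  omega

theorem delCell_injOn (μ : Partn) : Set.InjOn (delCell μ) {j | delable μ j} := by
  intro j hj k hk hjk
  by_contra hne
  have h1 := congrArg (fun p => Partn.parts p j) hjk
  rw [delCell_parts hj, delCell_parts hk, if_pos rfl, if_neg hne] at h1
  have : delable μ j := hj
  unfold delable at this
  omega
def Lset (s t : Partn) : Set ℕ := {j | addable t j ∧ HStrip s (addCell t j)}
def Rset (s t : Partn) : Set ℕ := {j | delable s j ∧ HStrip (delCell s j) t}

theorem Rset_finite (s t : Partn) : (Rset s t).Finite := by
  apply Set.Finite.subset (Set.finite_Iio (bnd s))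
  intro j hj
  have hd : delable s j := hj.1
  unfold delable at hd
  simp only [Set.mem_Iio]
  by_contra hc
  have := bnd_spec s j (by omega)
  omega

open Classical in
theorem key_count (s t : Partn) :
    (Lset s t).ncard = (Rset s t).ncard + if HStrip s t then 1 else 0 := by
  by_cases h : HStrip s t
  · -- HStrip case : Lset = insert 0 (succ '' Rset)
    have hA : ∀ i, s.parts i ≤ t.parts i := fun i => (h i).1
    have hB : ∀ i, t.parts (i+1) ≤ s.parts i := fun i => (h i).2
    have h0 : 0 ∈ Lset s t := by
      have hadd : addable t 0 := fun k hk => by omega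
      refine ⟨hadd, fun i => ?_⟩
      simp only [addCell_parts hadd]
      constructor
      · split_ifs with hi
        · rw [hi]; have := hA 0; omega
        · exact hA i
      · rw [if_neg (by omega : ¬ i + 1 = 0)]
        exact hB i
    have hsucc : ∀ k, (k+1) ∈ Lset s t ↔ k ∈ Rset s t := by
      intro k
      constructor
      · rintro ⟨hadd, hs⟩
        have hkey := (hs k).2
        rw [addCell_parts hadd, if_pos rfl] at hkey
        have hdel : delable s k := by
          have h1 := hA (k+1)
          unfold delable; omega
        refine ⟨hdel, fun i => ?_⟩
        simp only [delCell_parts hdel]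
        constructor
        · split_ifs with hi
          · rw [hi]; have := hA k; omega
          · exact hA i
        · split_ifs with hi
          · rw [hi]; omega
          · exact hB i
      · rintro ⟨hdel, hr⟩
        have hd : delable s k := hdel
        unfold delable at hd
        have hkey := (hr k).2
        rw [delCell_parts hdel, if_pos rfl] at hkey
        have hsk := hA k
        have hadd : addable t (k+1) := by
          intro k' hk'
          have hkk : k' = k := by omega
          rw [hkk]; omega
        refine ⟨hadd, fun i => ?_⟩
        simp only [addCell_parts hadd]
        constructor
        · split_ifs with hi
          · rw [hi]; have := hA (k+1); omega
          · exact hA i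
        · split_ifs with hi
          · have hik : i = k := by omega
            rw [hik]; omega
          · exact hB i
    have himg : Lset s t = insert 0 ((· + 1) '' Rset s t) := by
      ext j
      cases j with
      | zero => simp [h0]
      | succ k =>
        simp only [Set.mem_insert_iff, Set.mem_image]
        constructor
        · intro hm
          right; exact ⟨k, (hsucc k).mp hm, rfl⟩
        · rintro (hc | ⟨m, hm, hmk⟩)
          · omega
          · have hmk' : m = k := by omega
            rw [hmk'] at hm
            exact (hsucc k).mpr hm
    rw [himg, if_pos h]
    rw [Set.ncard_insert_of_notMem (by rintro ⟨m, _, hm⟩; simp at hm)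
      ((Rset_finite s t).image _)]
    rw [Set.ncard_image_of_injective _ (add_left_injective 1)]
  · -- failure case : Lset = Rset
    have hsets : Lset s t = Rset s t := by
      ext j
      constructor
      · rintro ⟨hadd, hs⟩
        have P1 : ∀ i, s.parts i ≤ if i = j then t.parts j + 1 else t.parts i := by
          intro i; have := (hs i).1; rwa [addCell_parts hadd] at this
        have P2 : ∀ i, (if i + 1 = j then t.parts j + 1 else t.parts (i+1)) ≤ s.parts i := by
          intro i; have := (hs i).2; rwa [addCell_parts hadd] at this
        have hBall : ∀ i, t.parts (i+1) ≤ s.parts i := by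
          intro i
          have hp := P2 i
          by_cases hi : i + 1 = j
          · rw [if_pos hi, ← hi] at hp; omega
          · rwa [if_neg hi] at hp
        have hfail : ∃ i, ¬ (s.parts i ≤ t.parts i ∧ t.parts (i+1) ≤ s.parts i) := by
          by_contra hc
          push_neg at hc
          exact h (fun i => by have := hc i; exact ⟨by omega, by omega⟩)
        obtain ⟨i0, hi0⟩ := hfail
        have hi0' : t.parts i0 < s.parts i0 := by
          have := hBall i0; omega
        have hij : i0 = j := by
          by_contra hc
          have := P1 i0
          rw [if_neg hc] at this; omega
        rw [hij] at hi0'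
        have hp := P1 j
        rw [if_pos rfl] at hp
        have hsj : s.parts j = t.parts j + 1 := by omega
        have hdel : delable s j := by
          have h1 := P1 (j+1)
          rw [if_neg (by omega)] at h1
          have h2 := t.antitone j (j+1) (by omega)
          unfold delable; omega
        refine ⟨hdel, fun i => ?_⟩
        simp only [delCell_parts hdel]
        constructor
        · split_ifs with hi
          · rw [hi]; omega
          · have := P1 i; rw [if_neg hi] at this; omega
        · split_ifs with hi
          · have h2 : t.parts (i+1) ≤ t.parts j := t.antitone j (i+1) (by omega)
            omega
          · exact hBall i
      · rintro ⟨hdel, hr⟩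
        have hd : delable s j := hdel
        unfold delable at hd
        have Q1 : ∀ i, (if i = j then s.parts j - 1 else s.parts i) ≤ t.parts i := by
          intro i; have := (hr i).1; rwa [delCell_parts hdel] at this
        have Q2 : ∀ i, t.parts (i+1) ≤ if i = j then s.parts j - 1 else s.parts i := by
          intro i; have := (hr i).2; rwa [delCell_parts hdel] at this
        have hBall : ∀ i, t.parts (i+1) ≤ s.parts i := by
          intro i
          have hp := Q2 i
          by_cases hi : i = j
          · rw [if_pos hi] at hp; rw [hi] at hp ⊢; omega
          · rwa [if_neg hi] at hp
        have hfail : ∃ i, ¬ (s.parts i ≤ t.parts i ∧ t.parts (i+1) ≤ s.parts i) := by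
          by_contra hc
          push_neg at hc
          exact h (fun i => by have := hc i; exact ⟨by omega, by omega⟩)
        obtain ⟨i0, hi0⟩ := hfail
        have hi0' : t.parts i0 < s.parts i0 := by
          have := hBall i0; omega
        have hij : i0 = j := by
          by_contra hc
          have := Q1 i0
          rw [if_neg hc] at this; omega
        rw [hij] at hi0'
        have hq := Q1 j
        rw [if_pos rfl] at hq
        have hsj : s.parts j = t.parts j + 1 := by omega
        have hadd : addable t j := by
          intro k hk
          have h1 : s.parts j ≤ s.parts k := s.antitone k j (by omega)
          have h2 := Q1 k
          rw [if_neg (by omega)] at h2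
          omega
        refine ⟨hadd, fun i => ?_⟩
        simp only [addCell_parts hadd]
        constructor
        · split_ifs with hi
          · rw [hi]; omega
          · have := Q1 i; rw [if_neg hi] at this; omega
        · split_ifs with hi
          · have h1 : s.parts j ≤ s.parts i := s.antitone i j (by omega)
            omega
          · by_cases hij2 : i = j
            · have := Q2 i
              rw [if_pos hij2] at this
              rw [hij2] at this ⊢
              omega
            · have := Q2 i
              rwa [if_neg hij2] at this
    rw [hsets, if_neg h, add_zero]
theorem sub_finite (μ : Partn) : {ν : Partn | HStrip ν μ}.Finite := by
  apply Set.Finite.subset (finite_bounded μ.parts (bnd μ) (bnd_spec μ))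
  intro ν hν i
  exact (hν i).1

theorem addable_lt (μ : Partn) : {j | addable μ j} ⊆ Set.Iio (bnd μ + 1) := by
  intro j hj
  simp only [Set.mem_Iio]
  by_contra hc
  push_neg at hc
  have hj1 : j = (j-1) + 1 := by omega
  have h1 := hj (j-1) hj1
  have h2 := bnd_spec μ (j-1) (by omega)
  omega

theorem add_finite (μ : Partn) : {lam : Partn | AddSqP μ lam}.Finite := by
  have h1 : {lam : Partn | AddSqP μ lam} = addCell μ '' {j | addable μ j} := by
    ext lam
    simp only [Set.mem_setOf_eq, Set.mem_image, addSq_iff]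
    constructor
    · rintro ⟨j, hj, h⟩; exact ⟨j, hj, h.symm⟩
    · rintro ⟨j, hj, h⟩; exact ⟨j, hj, h.symm⟩
  rw [h1]
  exact Set.Finite.image _ ((Set.finite_Iio _).subset (addable_lt μ))

noncomputable def subFin (μ : Partn) : Finset Partn := (sub_finite μ).toFinset
noncomputable def addFin (μ : Partn) : Finset Partn := (add_finite μ).toFinset

theorem mem_subFin {μ ν : Partn} : ν ∈ subFin μ ↔ HStrip ν μ := by
  simp [subFin, Set.Finite.mem_toFinset]
theorem mem_addFin {μ lam : Partn} : lam ∈ addFin μ ↔ AddSqP μ lam := by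
  simp [addFin, Set.Finite.mem_toFinset]

open Classical in
noncomputable def bigT (μ : Partn) : Finset Partn :=
  (finite_bounded (fun i => μ.parts i + (if i ≤ bnd μ then 1 else 0)) (bnd μ + 1)
    (fun i hi => by
      rw [if_neg (by omega), bnd_spec μ i (by omega)])).toFinset

open Classical in
theorem mem_bigT {μ p : Partn} :
    p ∈ bigT μ ↔ ∀ i, p.parts i ≤ μ.parts i + (if i ≤ bnd μ then 1 else 0) := by
  simp [bigT, Set.Finite.mem_toFinset]

theorem bigT_of_le {μ p : Partn} (h : ∀ i, p.parts i ≤ μ.parts i) : p ∈ bigT μ := by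
  rw [mem_bigT]; intro i; have := h i
  split_ifs <;> omega

theorem bigT_mono {μ p q : Partn} (hpq : ∀ i, p.parts i ≤ q.parts i) (hq : q ∈ bigT μ) :
    p ∈ bigT μ := by
  rw [mem_bigT] at hq ⊢
  intro i; have h1 := hq i; have h2 := hpq i
  split_ifs at h1 ⊢ <;> omega

theorem addSq_mem_bigT {μ ρ ν : Partn} (hρ : ∀ i, ρ.parts i ≤ μ.parts i)
    (h : AddSqP ρ ν) : ν ∈ bigT μ := by
  obtain ⟨j, hj, hne⟩ := h
  rw [mem_bigT]
  intro i
  by_cases hij : i = j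
  · subst hij
    have hjb : i ≤ bnd μ := by
      rcases Nat.eq_zero_or_pos i with h0 | h0
      · omega
      · have h1 : ν.parts (i-1) = ρ.parts (i-1) := hne (i-1) (by omega)
        have h2 : ν.parts i ≤ ν.parts (i-1) := ν.antitone (i-1) i (by omega)
        have h3 : 1 ≤ μ.parts (i-1) := by
          have := hρ (i-1); omega
        by_contra hc
        have := bnd_spec μ (i-1) (by omega)
        omega
    rw [if_pos hjb]
    have := hρ i; omega
  · rw [hne i hij]
    have := hρ i
    split_ifs <;> omega

open Classical in
noncomputable def z : ℕ → Partn → ℕ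
  | 0, μ => if μ = Partn.empty then 1 else 0
  | n+1, μ => ∑ ν ∈ subFin μ, z n ν

theorem hstrip_refl (μ : Partn) : HStrip μ μ :=
  fun j => ⟨le_rfl, μ.antitone j (j+1) (by omega)⟩

theorem hstrip_empty_iff {ν : Partn} : HStrip ν Partn.empty ↔ ν = Partn.empty := by
  constructor
  · intro h
    exact eq_empty_of_le fun i => (h i).1
  · rintro rfl
    exact hstrip_refl _

theorem subFin_empty : subFin Partn.empty = {Partn.empty} := by
  ext ν
  simp [mem_subFin, hstrip_empty_iff]

theorem z_empty (n : ℕ) : z n Partn.empty = 1 := by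
  induction n with
  | zero => simp [z]
  | succ n ih => rw [z, subFin_empty, Finset.sum_singleton, ih]

theorem filter_card_eq_ncard {P : Partn → Prop} [DecidablePred P] {T : Finset Partn}
    (h : ∀ x, P x → x ∈ T) :
    (T.filter P).card = {x | P x}.ncard := by
  have hfin : {x | P x}.Finite := Set.Finite.subset T.finite_toSet h
  rw [Set.ncard_eq_toFinset_card _ hfin]
  apply congrArg Finset.card
  ext x
  simp only [Finset.mem_filter, Set.Finite.mem_toFinset, Set.mem_setOf_eq]
  exact ⟨fun hx => hx.2, fun hx => ⟨h x hx, hx⟩⟩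

theorem sum_ite_filter_eq {P : Partn → Prop} [DecidablePred P] {T F : Finset Partn}
    (hF : ∀ x, x ∈ F ↔ P x)
    (hT : ∀ x, P x → x ∈ T) (g : Partn → ℕ) :
    ∑ x ∈ T, (if P x then g x else 0) = ∑ x ∈ F, g x := by
  rw [← Finset.sum_filter]
  apply Finset.sum_congr _ (fun _ _ => rfl)
  ext x
  simp only [Finset.mem_filter, hF]
  exact ⟨fun h => h.2, fun h => ⟨hT x h, h⟩⟩

open Classical in
theorem key_sets (s t : Partn) :
    {lam | AddSqP t lam ∧ HStrip s lam}.ncard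
      = {ρ | AddSqP ρ s ∧ HStrip ρ t}.ncard + if HStrip s t then 1 else 0 := by
  have hL : {lam | AddSqP t lam ∧ HStrip s lam} = addCell t '' Lset s t := by
    ext lam
    simp only [Set.mem_setOf_eq, Set.mem_image]
    constructor
    · rintro ⟨hadd, hs⟩
      obtain ⟨j, hj, rfl⟩ := addSq_iff.mp hadd
      exact ⟨j, ⟨hj, hs⟩, rfl⟩
    · rintro ⟨j, ⟨hj, hs⟩, rfl⟩
      exact ⟨addSq_iff.mpr ⟨j, hj, rfl⟩, hs⟩
  have hR : {ρ | AddSqP ρ s ∧ HStrip ρ t} = delCell s '' Rset s t := by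
    ext ρ
    simp only [Set.mem_setOf_eq, Set.mem_image]
    constructor
    · rintro ⟨hdel, hs⟩
      obtain ⟨j, hj, rfl⟩ := delSq_iff.mp hdel
      exact ⟨j, ⟨hj, hs⟩, rfl⟩
    · rintro ⟨j, ⟨hj, hs⟩, rfl⟩
      exact ⟨delSq_iff.mpr ⟨j, hj, rfl⟩, hs⟩
  rw [hL, hR,
    Set.ncard_image_of_injOn ((addCell_injOn t).mono (fun j hj => hj.1)),
    Set.ncard_image_of_injOn ((delCell_injOn s).mono (fun j hj => hj.1)),
    key_count]

open Classical in
theorem key2 (n : ℕ) (μ : Partn) : ∑ lam ∈ addFin μ, z n lam = n * z n μ := by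
  induction n generalizing μ with
  | zero =>
    rw [zero_mul]
    apply Finset.sum_eq_zero
    intro lam hlam
    rw [mem_addFin] at hlam
    simp only [z]
    rw [if_neg]
    rintro rfl
    obtain ⟨j, hj, -⟩ := hlam
    exact absurd hj (by simp [empty_parts])
  | succ n ih =>
    set T := bigT μ with hT
    have haddT : ∀ lam, AddSqP μ lam → lam ∈ T :=
      fun lam h => addSq_mem_bigT (fun i => le_rfl) h
    have hsubT : ∀ ρ, HStrip ρ μ → ρ ∈ T :=
      fun ρ h => bigT_of_le (fun i => (h i).1)
    -- Step A : double sum over T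
    have hA : ∑ lam ∈ addFin μ, z (n+1) lam
        = ∑ lam ∈ T, ∑ ν ∈ T, (if AddSqP μ lam ∧ HStrip ν lam then z n ν else 0) := by
      simp only [z]
      rw [← sum_ite_filter_eq (fun lam => mem_addFin) haddT
        (fun lam => ∑ ν ∈ subFin lam, z n ν)]
      apply Finset.sum_congr rfl
      intro lam hlam
      by_cases hadd : AddSqP μ lam
      · rw [if_pos hadd]
        rw [← sum_ite_filter_eq (fun ν => mem_subFin)
          (fun ν hν => bigT_mono (fun i => (hν i).1)
            (haddT lam hadd)) (fun ν => z n ν)]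
        apply Finset.sum_congr rfl
        intro ν _
        by_cases hs : HStrip ν lam
        · rw [if_pos hs, if_pos ⟨hadd, hs⟩]
        · rw [if_neg hs, if_neg (by tauto)]
      · rw [if_neg hadd]
        symm
        apply Finset.sum_eq_zero
        intro ν _
        rw [if_neg (by tauto)]
    -- Step B-D : swap, count, apply key_sets
    have hC : ∀ ν : Partn, ∑ lam ∈ T, (if AddSqP μ lam ∧ HStrip ν lam then z n ν else 0)
        = ({ρ | AddSqP ρ ν ∧ HStrip ρ μ}.ncard) * z n ν
          + (if HStrip ν μ then z n ν else 0) := by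
      intro ν
      have : ∑ lam ∈ T, (if AddSqP μ lam ∧ HStrip ν lam then z n ν else 0)
          = (T.filter (fun lam => AddSqP μ lam ∧ HStrip ν lam)).card * z n ν := by
        rw [← Finset.sum_filter, Finset.sum_const, smul_eq_mul]
      rw [this, filter_card_eq_ncard (P := fun lam => AddSqP μ lam ∧ HStrip ν lam)
        (fun lam hlam => haddT lam hlam.1), key_sets ν μ,
        add_mul]
      congr 1
      split_ifs <;> simp
    -- assemble
    rw [hA, Finset.sum_comm]
    have hsum : ∑ ν ∈ T, (({ρ | AddSqP ρ ν ∧ HStrip ρ μ}.ncard) * z n ν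
          + (if HStrip ν μ then z n ν else 0))
        = (∑ ν ∈ T, ({ρ | AddSqP ρ ν ∧ HStrip ρ μ}.ncard) * z n ν) + z (n+1) μ := by
      rw [Finset.sum_add_distrib]
      congr 1
      rw [sum_ite_filter_eq (fun ν => mem_subFin) hsubT (fun ν => z n ν)]
      simp only [z]
    rw [Finset.sum_congr rfl (fun ν _ => hC ν), hsum]
    -- first term equals n * z (n+1) μ
    have hfirst : ∑ ν ∈ T, ({ρ | AddSqP ρ ν ∧ HStrip ρ μ}.ncard) * z n ν
        = n * z (n+1) μ := by
      have hcount : ∀ ν : Partn, ({ρ | AddSqP ρ ν ∧ HStrip ρ μ}.ncard) * z n ν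
          = ∑ ρ ∈ T, (if AddSqP ρ ν ∧ HStrip ρ μ then z n ν else 0) := by
        intro ν
        rw [← Finset.sum_filter, Finset.sum_const, smul_eq_mul,
          filter_card_eq_ncard (P := fun ρ => AddSqP ρ ν ∧ HStrip ρ μ)
            (fun ρ hρ => hsubT ρ hρ.2)]
      rw [Finset.sum_congr rfl (fun ν _ => hcount ν), Finset.sum_comm]
      have hinner : ∀ ρ ∈ T, ∑ ν ∈ T, (if AddSqP ρ ν ∧ HStrip ρ μ then z n ν else 0)
          = (if HStrip ρ μ then n * z n ρ else 0) := by
        intro ρ _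
        by_cases hs : HStrip ρ μ
        · rw [if_pos hs]
          rw [← ih ρ]
          rw [← sum_ite_filter_eq (fun ν => mem_addFin)
            (fun ν hν => addSq_mem_bigT (fun i => (hs i).1) hν) (fun ν => z n ν)]
          apply Finset.sum_congr rfl
          intro ν _
          by_cases ha : AddSqP ρ ν
          · rw [if_pos ha, if_pos ⟨ha, hs⟩]
          · rw [if_neg ha, if_neg (by tauto)]
        · rw [if_neg hs]
          apply Finset.sum_eq_zero
          intro ν _
          rw [if_neg (by tauto)]
      rw [Finset.sum_congr rfl hinner]
      rw [sum_ite_filter_eq (fun ρ => mem_subFin) hsubT (fun ρ => n * z n ρ)]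
      rw [← Finset.mul_sum]
      simp only [z]
    rw [hfirst]
    show n * z (n+1) μ + z (n+1) μ = (n+1) * z (n+1) μ
    ring
theorem toFinset_filter_card {α : Type*} {s : Set α} (hs : s.Finite) (P : α → Prop)
    [DecidablePred P] : (hs.toFinset.filter P).card = {x | x ∈ s ∧ P x}.ncard := by
  have hfin2 : {x | x ∈ s ∧ P x}.Finite := hs.subset (fun x hx => hx.1)
  rw [Set.ncard_eq_toFinset_card _ hfin2]
  apply congrArg Finset.card
  ext x
  simp [Set.Finite.mem_toFinset]

def Yset (n : ℕ) (μ : Partn) : Set (ℕ → Partn) :=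
  {f | f 0 = Partn.empty ∧
    (∀ i, i < n → HStrip (f (2*i)) (f (2*i+1)) ∧ AddSqP (f (2*i+2)) (f (2*i+1))) ∧
    f (2*n) = μ ∧ ∀ i, 2*n < i → f i = Partn.empty}

def extF (n : ℕ) (μ lam : Partn) (g : ℕ → Partn) (i : ℕ) : Partn :=
  if i ≤ 2*n then g i else if i = 2*n+1 then lam else if i = 2*n+2 then μ else Partn.empty

def truncF (n : ℕ) (f : ℕ → Partn) (i : ℕ) : Partn :=
  if i ≤ 2*n then f i else Partn.empty

theorem truncF_le {n : ℕ} {f : ℕ → Partn} {i : ℕ} (h : i ≤ 2*n) :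
    truncF n f i = f i := by
  rw [truncF, if_pos h]

theorem truncF_big {n : ℕ} {f : ℕ → Partn} {i : ℕ} (h : 2*n < i) :
    truncF n f i = Partn.empty := by
  rw [truncF, if_neg (by omega)]

theorem extF_le {n : ℕ} {μ lam : Partn} {g : ℕ → Partn} {i : ℕ} (h : i ≤ 2*n) :
    extF n μ lam g i = g i := by
  rw [extF, if_pos h]

theorem extF_odd {n : ℕ} {μ lam : Partn} {g : ℕ → Partn} :
    extF n μ lam g (2*n+1) = lam := by
  rw [extF, if_neg (by omega), if_pos rfl]

theorem extF_top {n : ℕ} {μ lam : Partn} {g : ℕ → Partn} :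
    extF n μ lam g (2*n+2) = μ := by
  rw [extF, if_neg (by omega), if_neg (by omega), if_pos rfl]

theorem extF_big {n : ℕ} {μ lam : Partn} {g : ℕ → Partn} {i : ℕ} (h : 2*n+2 < i) :
    extF n μ lam g i = Partn.empty := by
  rw [extF, if_neg (by omega), if_neg (by omega), if_neg (by omega)]

theorem extF_injOn (n : ℕ) (μ lam ν : Partn) :
    Set.InjOn (extF n μ lam) (Yset n ν) := by
  intro g hg g' hg' he
  funext i
  by_cases hi : i ≤ 2*n
  · have := congrFun he i
    rwa [extF_le hi, extF_le hi] at this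
  · rw [hg.2.2.2 i (by omega), hg'.2.2.2 i (by omega)]

theorem fiber_eq (n : ℕ) (μ lam ν : Partn) (hadd : AddSqP μ lam) (hhs : HStrip ν lam) :
    {f | f ∈ Yset (n+1) μ ∧ f (2*n+1) = lam ∧ f (2*n) = ν}
      = extF n μ lam '' Yset n ν := by
  ext f
  simp only [Set.mem_setOf_eq, Set.mem_image]
  constructor
  · rintro ⟨⟨h0, hsteps, htop, hbig⟩, hodd, heven⟩
    refine ⟨truncF n f, ⟨?_, ?_, ?_, ?_⟩, ?_⟩
    · rw [truncF_le (by omega)]; exact h0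
    · intro i hi
      rw [truncF_le (by omega : 2*i ≤ 2*n), truncF_le (by omega : 2*i+1 ≤ 2*n),
        truncF_le (by omega : 2*i+2 ≤ 2*n)]
      exact hsteps i (by omega)
    · rw [truncF_le (le_refl (2*n))]; exact heven
    · intro i hi; rw [truncF_big (by omega)]
    · funext i
      by_cases h1 : i ≤ 2*n
      · rw [extF_le h1, truncF_le h1]
      · by_cases h2 : i = 2*n+1
        · rw [h2, extF_odd, ← hodd]
        · by_cases h3 : i = 2*n+2
          · rw [h3, extF_top]
            have : 2*(n+1) = 2*n+2 := by ring
            rw [← this]; exact htop.symm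
          · rw [extF_big (by omega)]
            exact (hbig i (by omega)).symm
  · rintro ⟨g, ⟨h0, hsteps, hnu, hbig⟩, rfl⟩
    refine ⟨⟨?_, ?_, ?_, ?_⟩, extF_odd, by rw [extF_le (by omega)]; exact hnu⟩
    · rw [extF_le (by omega)]; exact h0
    · intro i hi
      by_cases hin : i < n
      · rw [extF_le (by omega : 2*i ≤ 2*n), extF_le (by omega : 2*i+1 ≤ 2*n),
          extF_le (by omega : 2*i+2 ≤ 2*n)]
        exact hsteps i hin
      · have hieq : i = n := by omega
        subst hieq
        rw [extF_le (le_refl (2*i)), hnu]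
        have h1 : 2*i+1 = 2*i+1 := rfl
        rw [extF_odd]
        have h2 : (2*i+2 : ℕ) = 2*i+2 := rfl
        rw [extF_top]
        exact ⟨hhs, hadd⟩
    · have : 2*(n+1) = 2*n+2 := by ring
      rw [this, extF_top]
    · intro i hi
      exact extF_big (by omega)

open Classical in
theorem Yset_card (n : ℕ) : ∀ μ : Partn,
    (Yset n μ).Finite ∧ (Yset n μ).ncard = n.factorial * z n μ := by
  induction n with
  | zero =>
    intro μ
    by_cases hμ : μ = Partn.empty
    · subst hμ
      have hset : Yset 0 Partn.empty = {fun _ => Partn.empty} := by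
        ext f
        simp only [Yset, Set.mem_setOf_eq, Set.mem_singleton_iff]
        constructor
        · rintro ⟨h0, -, -, hbig⟩
          funext i
          rcases Nat.eq_zero_or_pos i with h | h
          · rw [h]; exact h0
          · exact hbig i (by omega)
        · rintro rfl
          exact ⟨rfl, fun i hi => absurd hi (by omega), rfl, fun i hi => rfl⟩
      rw [hset]
      exact ⟨Set.finite_singleton _, by simp [Set.ncard_singleton, z_empty]⟩
    · have hset : Yset 0 μ = ∅ := by
        ext f
        simp only [Yset, Set.mem_setOf_eq, Set.mem_empty_iff_false, iff_false]
        rintro ⟨h0, -, htop, -⟩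
        exact hμ (by rw [← htop]; exact h0.symm ▸ h0 ▸ rfl)
      rw [hset]
      refine ⟨Set.finite_empty, ?_⟩
      rw [Set.ncard_empty]
      have : z 0 μ = 0 := by simp [z, hμ]
      rw [this, mul_zero]
  | succ n ih =>
    intro μ
    set S : Finset (Partn × Partn) :=
      (addFin μ ×ˢ bigT μ).filter (fun b => AddSqP μ b.1 ∧ HStrip b.2 b.1) with hSdef
    have hmemS : ∀ b : Partn × Partn, b ∈ S ↔ AddSqP μ b.1 ∧ HStrip b.2 b.1 := by
      intro b
      rw [hSdef, Finset.mem_filter, Finset.mem_product]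
      constructor
      · exact fun h => h.2
      · intro h
        refine ⟨⟨mem_addFin.mpr h.1, ?_⟩, h⟩
        exact bigT_mono (fun i => (h.2 i).1) (addSq_mem_bigT (fun i => le_rfl) h.1)
    have hS : ∀ f ∈ Yset (n+1) μ, (f (2*n+1), f (2*n)) ∈ S := by
      intro f hf
      obtain ⟨h0, hsteps, htop, hbig⟩ := hf
      have hn := hsteps n (by omega)
      have h22 : 2*(n+1) = 2*n+2 := by ring
      rw [h22] at htop
      rw [hmemS]
      exact ⟨htop ▸ hn.2, hn.1⟩
    -- finiteness
    have hfib : ∀ b ∈ S, {f | f ∈ Yset (n+1) μ ∧ f (2*n+1) = b.1 ∧ f (2*n) = b.2}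
        = extF n μ b.1 '' Yset n b.2 := by
      intro b hb
      rw [hmemS] at hb
      exact fiber_eq n μ b.1 b.2 hb.1 hb.2
    have hfin : (Yset (n+1) μ).Finite := by
      apply Set.Finite.subset (Set.Finite.biUnion S.finite_toSet
        (fun b hb => ((ih b.2).1.image (extF n μ b.1))))
      intro f hf
      rw [Set.mem_iUnion₂]
      refine ⟨(f (2*n+1), f (2*n)), hS f hf, ?_⟩
      rw [← hfib _ (hS f hf)]
      exact ⟨hf, rfl, rfl⟩
    refine ⟨hfin, ?_⟩
    rw [Set.ncard_eq_toFinset_card _ hfin]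
    rw [Finset.card_eq_sum_card_fiberwise
      (f := fun f => (f (2*n+1), f (2*n))) (t := S)
      (fun x hx => hS x (hfin.mem_toFinset.mp hx))]
    have hfibcard : ∀ b ∈ S,
        (hfin.toFinset.filter (fun f => (f (2*n+1), f (2*n)) = b)).card
          = n.factorial * z n b.2 := by
      intro b hb
      rw [toFinset_filter_card hfin _]
      have hseteq : {x | x ∈ Yset (n+1) μ ∧ (x (2*n+1), x (2*n)) = b}
          = {f | f ∈ Yset (n+1) μ ∧ f (2*n+1) = b.1 ∧ f (2*n) = b.2} := by
        ext f
        simp only [Set.mem_setOf_eq, Prod.ext_iff]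
      rw [hseteq, hfib b hb, Set.ncard_image_of_injOn (extF_injOn n μ b.1 b.2),
        (ih b.2).2]
    rw [Finset.sum_congr rfl hfibcard, ← Finset.mul_sum]
    -- now compute the sum
    have hsum : ∑ b ∈ S, z n b.2 = (n+1) * z (n+1) μ := by
      rw [hSdef, Finset.sum_filter, Finset.sum_product]
      have hin : ∀ lam ∈ addFin μ,
          (∑ ν ∈ bigT μ, if AddSqP μ lam ∧ HStrip ν lam then z n ν else 0)
            = z (n+1) lam := by
        intro lam hlam
        rw [mem_addFin] at hlam
        have : ∀ ν ∈ bigT μ, (if AddSqP μ lam ∧ HStrip ν lam then z n ν else 0)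
            = (if HStrip ν lam then z n ν else 0) := by
          intro ν _
          by_cases hs : HStrip ν lam
          · rw [if_pos hs, if_pos ⟨hlam, hs⟩]
          · rw [if_neg hs, if_neg (by tauto)]
        rw [Finset.sum_congr rfl this,
          sum_ite_filter_eq (fun ν => mem_subFin)
            (fun ν hν => bigT_mono (fun i => (hν i).1)
              (addSq_mem_bigT (fun i => le_rfl) hlam)) (fun ν => z n ν)]
        simp only [z]
      rw [Finset.sum_congr rfl hin, key2]
    rw [hsum, Nat.factorial_succ]
    ring
noncomputable def lhsEquiv (n : ℕ) :
    {a : ℕ → ℕ | (∀ i, i = 0 ∨ n < i → a i = 0) ∧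
      (∀ i, 1 ≤ i → i ≤ n → 1 ≤ a i ∧ a i ≤ i)} ≃ (∀ i : Fin n, Fin (i.1+1)) where
  toFun a := fun i => ⟨a.1 (i.1+1) - 1, by
    have hlt := i.isLt
    have h := a.2.2 (i.1+1) (by omega) (by omega)
    omega⟩
  invFun g := ⟨fun i => if h : 1 ≤ i ∧ i ≤ n then (g ⟨i-1, by omega⟩).1 + 1 else 0,
    ⟨fun i hi => by dsimp only; rw [dif_neg (by omega)],
     fun i h1 h2 => by
       dsimp only
       rw [dif_pos ⟨h1, h2⟩]
       exact ⟨Nat.succ_le_succ (Nat.zero_le _),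
         Nat.succ_le_of_lt (lt_of_lt_of_le (g ⟨i-1, by omega⟩).isLt
           (show i - 1 + 1 ≤ i by omega))⟩⟩⟩
  left_inv a := by
    apply Subtype.ext
    funext i
    dsimp only
    by_cases h : 1 ≤ i ∧ i ≤ n
    · rw [dif_pos h]
      have h2 := a.2.2 i h.1 h.2
      show (a.1 (i - 1 + 1) - 1) + 1 = a.1 i
      have h3 : i - 1 + 1 = i := by omega
      rw [h3]
      omega
    · rw [dif_neg h]
      have := a.2.1 i (by omega)
      omega
  right_inv g := by
    funext i
    apply Fin.ext
    have hlt := i.isLt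
    dsimp only
    rw [dif_pos ⟨by omega, by omega⟩]
    show ((g ⟨i.1+1-1, by omega⟩ : Fin _) : ℕ) + 1 - 1 = ((g i : Fin _) : ℕ)
    rw [Nat.add_sub_cancel]
    exact congrArg (fun j : Fin n => ((g j : ℕ)))
      (Fin.ext (show i.1 + 1 - 1 = (i : ℕ) by omega))

theorem lhs_card (n : ℕ) :
    {a : ℕ → ℕ | (∀ i, i = 0 ∨ n < i → a i = 0) ∧
      (∀ i, 1 ≤ i → i ≤ n → 1 ≤ a i ∧ a i ≤ i)}.ncard = n.factorial := by
  rw [← Nat.card_coe_set_eq, Nat.card_congr (lhsEquiv n),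
    Nat.card_eq_fintype_card, Fintype.card_pi]
  simp only [Fintype.card_fin]
  rw [Fin.prod_univ_eq_prod_range (fun i => i + 1) n]
  exact Finset.prod_range_add_one_eq_factorial n

end PfAux

/-- Theorem 2.4: for every `n ≥ 0`, sequences `(a 1, …, a n)` with `1 ≤ a i ≤ i` (fillings
of `Δ_n` with exactly one 1 per row) are equinumerous with sequences `(λ^0, …, λ^{2n})` of
partitions with `λ^0 = λ^{2n} = ∅` where each `λ^{2i+1}` is obtained from `λ^{2i}` by
adding a (possibly empty) horizontal strip and each `λ^{2i+2}` is obtained from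
`λ^{2i+1}` by deleting exactly one square. -/
theorem stmt16 (n : ℕ) :
    {a : ℕ → ℕ | (∀ i, i = 0 ∨ n < i → a i = 0) ∧
      (∀ i, 1 ≤ i → i ≤ n → 1 ≤ a i ∧ a i ≤ i)}.ncard =
    {f : ℕ → Partn | (∀ i, 2 * n < i → f i = Partn.empty) ∧
      f 0 = Partn.empty ∧ f (2 * n) = Partn.empty ∧
      (∀ i, 2 * i + 1 ≤ 2 * n → HStrip (f (2 * i)) (f (2 * i + 1))) ∧
      (∀ i, 2 * i + 2 ≤ 2 * n → AddSqP (f (2 * i + 2)) (f (2 * i + 1)))}.ncard := by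
  rw [PfAux.lhs_card]
  have hset : {f : ℕ → Partn | (∀ i, 2 * n < i → f i = Partn.empty) ∧
      f 0 = Partn.empty ∧ f (2 * n) = Partn.empty ∧
      (∀ i, 2 * i + 1 ≤ 2 * n → HStrip (f (2 * i)) (f (2 * i + 1))) ∧
      (∀ i, 2 * i + 2 ≤ 2 * n → AddSqP (f (2 * i + 2)) (f (2 * i + 1)))}
      = PfAux.Yset n Partn.empty := by
    ext f
    simp only [PfAux.Yset, Set.mem_setOf_eq]
    constructor
    · rintro ⟨hbig, h0, htop, hodd, heven⟩
      exact ⟨h0, fun i hi => ⟨hodd i (by omega), heven i (by omega)⟩, htop, hbig⟩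
    · rintro ⟨h0, hsteps, htop, hbig⟩
      exact ⟨hbig, h0, htop, fun i hi => (hsteps i (by omega)).1,
        fun i hi => (hsteps i (by omega)).2⟩
  rw [hset, (PfAux.Yset_card n Partn.empty).2, PfAux.z_empty, mul_one]
end
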